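/- arXiv:0804.0633 — 5 statements merged into one kernel-verified Lean document; each statement's English description precedes it below -/
import Mathlib

section
/- Let p be a noncommutative polynomial of degree d in g letters (evaluated on g-tuples of real symmetric matrices) and set N(g,d) = Σ_{j=0}^{d} g^j. If p(X) = 0 for every X in some nonempty open subset U of S_{N(g,d)}(ℝ^g), then p = 0. -/
open scoped BigOperators Kronecker Matrix

namespace NCConvexity

/-! ### Noncommutative polynomials in two classes of `g` letters:
`a`-letters are `Sum.inl i`, `x`-letters are `Sum.inr i`. -/

/-- The alphabet: `g` letters `a` and `g` letters `x`. -/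
abbrev L2 (g : ℕ) := Sum (Fin g) (Fin g)

/-- Words in the letters `(a, x)`. -/
abbrev Word2 (g : ℕ) := FreeMonoid (L2 g)

/-- The free algebra `ℝ⟨a,x⟩` of noncommutative polynomials in the `2g` letters. -/
abbrev NC2 (g : ℕ) := MonoidAlgebra ℝ (Word2 g)

variable {g : ℕ}

/-- Number of `x`-letters in a list of letters. -/
def xCountL (w : List (L2 g)) : ℕ := w.countP (fun l => l.isRight)

/-- Number of `a`-letters in a list of letters. -/
def aCountL (w : List (L2 g)) : ℕ := w.countP (fun l => l.isLeft)

/-- Number of `x`-letters in a word. -/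
def xCount (w : Word2 g) : ℕ := xCountL (FreeMonoid.toList w)

/-- Number of `a`-letters in a word. -/
def aCount (w : Word2 g) : ℕ := aCountL (FreeMonoid.toList w)

/-- `p` has degree at most `k` in `x`. -/
def xDegLe (p : NC2 g) (k : ℕ) : Prop := ∀ w ∈ p.coeff.support, xCount w ≤ k

/-- `p` has degree at most `k` in `a`. -/
def aDegLe (p : NC2 g) (k : ℕ) : Prop := ∀ w ∈ p.coeff.support, aCount w ≤ k

/-- `p` is homogeneous of degree `k` in `x`. -/
def xHomog (p : NC2 g) (k : ℕ) : Prop := ∀ w ∈ p.coeff.support, xCount w = k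

/-- `p` is homogeneous of degree `k` in `a`. -/
def aHomog (p : NC2 g) (k : ℕ) : Prop := ∀ w ∈ p.coeff.support, aCount w = k

/-- The degree of `p` in `x`. -/
noncomputable def xDegree (p : NC2 g) : ℕ := p.coeff.support.sup xCount

/-- The degree of `p` in `a`. -/
noncomputable def aDegree (p : NC2 g) : ℕ := p.coeff.support.sup aCount

/-- `p` is a polynomial in the letters `a` alone (no `x`-letters occur). -/
def inAOnly (p : NC2 g) : Prop := ∀ w ∈ p.coeff.support, xCount w = 0

/-- The transpose (reversal) involution on `ℝ⟨a,x⟩`. -/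
noncomputable def ncT (p : NC2 g) : NC2 g :=
  MonoidAlgebra.ofCoeff (Finsupp.mapDomain (fun w : Word2 g => FreeMonoid.ofList (FreeMonoid.toList w).reverse) p.coeff)

/-- `p` is a symmetric polynomial. -/
def IsSymPoly (p : NC2 g) : Prop := ncT p = p

/-- A letter, as an element of `ℝ⟨a,x⟩`. -/
noncomputable def ltr (l : L2 g) : NC2 g := MonoidAlgebra.of ℝ (Word2 g) (FreeMonoid.of l)

/-- Evaluation of a list of letters at a pair of `g`-tuples of matrices. -/
def listEval {m : Type} [Fintype m] [DecidableEq m]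
    (w : List (L2 g)) (A X : Fin g → Matrix m m ℝ) : Matrix m m ℝ :=
  (w.map (Sum.elim A X)).prod

/-- Evaluation of a word at a pair of `g`-tuples of matrices. -/
def wordEval {m : Type} [Fintype m] [DecidableEq m]
    (w : Word2 g) (A X : Fin g → Matrix m m ℝ) : Matrix m m ℝ :=
  listEval (FreeMonoid.toList w) A X

/-- Evaluation of a polynomial `p(a,x)` at a pair of `g`-tuples of matrices:
substitute `A i` for `a_i` and `X i` for `x_i`. -/
noncomputable def eval {m : Type} [Fintype m] [DecidableEq m]
    (p : NC2 g) (A X : Fin g → Matrix m m ℝ) : Matrix m m ℝ :=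
  Finsupp.sum p.coeff (fun w c => c • wordEval w A X)

/-- A `g`-tuple of `n × n` real matrices. -/
abbrev MatTuple (g n : ℕ) := Fin g → Matrix (Fin n) (Fin n) ℝ

/-- A tuple of symmetric matrices, i.e. an element of `S_n(ℝ^g)`. -/
def IsSymTuple {m : Type} (A : Fin g → Matrix m m ℝ) : Prop := ∀ i, (A i).IsSymm

/-- Convex combination `t X + (1-t) Y` of two tuples. -/
noncomputable def cvx {m : Type} (t : ℝ) (X Y : Fin g → Matrix m m ℝ) :
    Fin g → Matrix m m ℝ := fun i => t • X i + (1 - t) • Y i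

/-- Direct sum of two square matrices. -/
noncomputable def dirSum {n m : ℕ} (M : Matrix (Fin n) (Fin n) ℝ) (N : Matrix (Fin m) (Fin m) ℝ) :
    Matrix (Fin (n + m)) (Fin (n + m)) ℝ :=
  Matrix.reindex finSumFinEquiv finSumFinEquiv (Matrix.fromBlocks M 0 0 N)

/-- Direct sum of two tuples of matrices. -/
noncomputable def tupDirSum {n m : ℕ} (A : MatTuple g n) (B : MatTuple g m) :
    MatTuple g (n + m) := fun i => dirSum (A i) (B i)

/-- The partial Hessian of `p` in `x` at `(A, X)` in the direction `H`: the second derivative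
at `t = 0` of `t ↦ p(A, X + tH)` (computed entrywise). -/
noncomputable def hess {m : Type} [Fintype m] [DecidableEq m]
    (p : NC2 g) (A X H : Fin g → Matrix m m ℝ) : Matrix m m ℝ :=
  Matrix.of fun i j =>
    iteratedDeriv 2 (fun t : ℝ => eval p A (fun k => X k + t • H k) i j) 0

/-- Evaluation of a matrix with entries in `ℝ⟨a,x⟩`, as one big block matrix. -/
noncomputable def evalMat {ι : Type} {m : Type} [Fintype m] [DecidableEq m]
    (Z : Matrix ι ι (NC2 g)) (A X : Fin g → Matrix m m ℝ) : Matrix (ι × m) (ι × m) ℝ :=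
  Matrix.of fun pr qr => eval (Z pr.1 qr.1) A X pr.2 qr.2

/-- A matrix of polynomials which is symmetric with respect to the transpose involution. -/
def SymPolyMat {ι : Type} (Z : Matrix ι ι (NC2 g)) : Prop := ∀ i j, ncT (Z i j) = Z j i

/-- `N(g,d) = Σ_{j=0}^d g^j`. -/
def Ngd (g d : ℕ) : ℕ := ∑ j ∈ Finset.range (d + 1), g ^ j

/-! ### Noncommutative polynomials in a single class of `g` letters. -/

abbrev Word1 (g : ℕ) := FreeMonoid (Fin g)

/-- Noncommutative polynomials in `g` letters. -/
abbrev NC1 (g : ℕ) := MonoidAlgebra ℝ (Word1 g)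

/-- Evaluation at a `g`-tuple of matrices. -/
noncomputable def eval1 {m : Type} [Fintype m] [DecidableEq m]
    (p : NC1 g) (A : Fin g → Matrix m m ℝ) : Matrix m m ℝ :=
  Finsupp.sum p.coeff (fun w c => c • ((FreeMonoid.toList w).map A).prod)

/-- The degree of a polynomial in `g` letters. -/
noncomputable def degree1 (p : NC1 g) : ℕ :=
  p.coeff.support.sup (fun w => (FreeMonoid.toList w).length)

/-! ### Noncommutative polynomials in three classes of `g` letters `(a, x, h)`. -/

abbrev L3 (g : ℕ) := Sum (Fin g) (Sum (Fin g) (Fin g))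
abbrev Word3 (g : ℕ) := FreeMonoid (L3 g)

/-- The free algebra `ℝ⟨a,x,h⟩`. -/
abbrev NC3 (g : ℕ) := MonoidAlgebra ℝ (Word3 g)

def hCount3 (w : Word3 g) : ℕ :=
  (FreeMonoid.toList w).countP (fun l => match l with | .inr (.inr _) => true | _ => false)

def xCount3 (w : Word3 g) : ℕ :=
  (FreeMonoid.toList w).countP (fun l => match l with | .inr (.inl _) => true | _ => false)

def aCount3 (w : Word3 g) : ℕ :=
  (FreeMonoid.toList w).countP (fun l => match l with | .inl _ => true | _ => false)

noncomputable def xDegree3 (q : NC3 g) : ℕ := q.coeff.support.sup xCount3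
noncomputable def aDegree3 (q : NC3 g) : ℕ := q.coeff.support.sup aCount3

/-- homogeneous of degree `k` in `h` -/
def hHomog3 (q : NC3 g) (k : ℕ) : Prop := ∀ w ∈ q.coeff.support, hCount3 w = k

/-- The transpose (reversal) involution on `ℝ⟨a,x,h⟩`. -/
noncomputable def ncT3 (q : NC3 g) : NC3 g :=
  MonoidAlgebra.ofCoeff (Finsupp.mapDomain (fun w : Word3 g => FreeMonoid.ofList (FreeMonoid.toList w).reverse) q.coeff)

def IsSymPoly3 (q : NC3 g) : Prop := ncT3 q = q

noncomputable def ltr3 (l : L3 g) : NC3 g := MonoidAlgebra.of ℝ (Word3 g) (FreeMonoid.of l)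

/-- The embedding `ℝ⟨a,x⟩ → ℝ⟨a,x,h⟩`. -/
noncomputable def emb23 {g : ℕ} : NC2 g →ₐ[ℝ] NC3 g :=
  MonoidAlgebra.lift ℝ (NC3 g) (Word2 g)
    (FreeMonoid.lift (fun l => ltr3 (Sum.map id Sum.inl l)))

/-- The substitution `a_i ↦ a_i`, `x_i ↦ x_i + t·h_i`, landing in polynomials in a central
variable `t` over `ℝ⟨a,x,h⟩`. -/
noncomputable def hessSubst {g : ℕ} : NC2 g →ₐ[ℝ] Polynomial (NC3 g) :=
  MonoidAlgebra.lift ℝ (Polynomial (NC3 g)) (Word2 g)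
    (FreeMonoid.lift (fun l => match l with
      | Sum.inl i => Polynomial.C (ltr3 (Sum.inl i))
      | Sum.inr i => Polynomial.C (ltr3 (Sum.inr (Sum.inl i)))
          + Polynomial.X * Polynomial.C (ltr3 (Sum.inr (Sum.inr i)))))

/-- The partial Hessian of `p(a,x)` with respect to `x`, as the polynomial
`p''_{xx}(a,x)[h]` in the letters `(a,x,h)`: the second derivative at `t = 0` of
`t ↦ p(a, x + t h)`, i.e. twice the coefficient of `t²`. -/
noncomputable def hessPoly (p : NC2 g) : NC3 g :=
  2 • Polynomial.coeff (hessSubst p) 2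

/-- The substitution sending every `x`-letter to `0` (and fixing the `a`-letters). -/
noncomputable def killX {g : ℕ} : NC2 g →ₐ[ℝ] NC2 g :=
  MonoidAlgebra.lift ℝ (NC2 g) (Word2 g)
    (FreeMonoid.lift (fun l => match l with
      | Sum.inl i => ltr (Sum.inl i)
      | Sum.inr _ => 0))

/-- The border monomial `h_j · m(a,x)`. -/
noncomputable def bmon (j : Fin g) (w : List (L2 g)) : NC3 g :=
  MonoidAlgebra.of ℝ (Word3 g)
    (FreeMonoid.ofList (Sum.inr (Sum.inr j) :: w.map (Sum.map id Sum.inl)))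

lemma countL_split (w : List (L2 g)) : xCountL w + aCountL w = w.length := by
  induction w with
  | nil => rfl
  | cons hd tl ih =>
    cases hd <;> simp [xCountL, aCountL, List.countP_cons] at * <;> omega

/-- The words indexing the border vector: at most `m` `x`-letters and at most `d` `a`-letters. -/
abbrev BWords (g m d : ℕ) := {w : List (L2 g) // xCountL w ≤ m ∧ aCountL w ≤ d}

noncomputable instance bwordsFintype (g m d : ℕ) : Fintype (BWords g m d) :=
  Fintype.ofInjective
    (fun w => fun i : Fin (m + d) => w.1[(i : ℕ)]?)
    (by
      rintro ⟨a, ha1, ha2⟩ ⟨b, hb1, hb2⟩ h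
      have hla : a.length ≤ m + d := by have := countL_split a; omega
      have hlb : b.length ≤ m + d := by have := countL_split b; omega
      apply Subtype.ext
      apply List.ext_getElem?
      intro i
      by_cases hi : i < m + d
      · exact congrFun h ⟨i, hi⟩
      · rw [List.getElem?_eq_none (le_trans hla (le_of_not_gt hi)),
          List.getElem?_eq_none (le_trans hlb (le_of_not_gt hi))])

/-- The index of the border vector: a direction `h_j` together with a word `m(a,x)`. -/
abbrev BIdx (g m d : ℕ) := Fin g × BWords g m d

/-- The border vector `V(a,x)[h]`, whose entries are the monomials `h_j · m(a,x)` with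
`m` a word having at most `m` `x`-letters and at most `d` `a`-letters. -/
noncomputable def borderVec (g m d : ℕ) : BIdx g m d → NC3 g :=
  fun jw => bmon jw.1 jw.2.1

/-- The number of positive eigenvalues (with multiplicity) of a real symmetric matrix. -/
noncomputable def posEig {m : Type} [Fintype m] [DecidableEq m] (M : Matrix m m ℝ) : ℕ :=
  if h : M.IsHermitian then (Finset.univ.filter (fun i => 0 < h.eigenvalues i)).card else 0

/-- The number of negative eigenvalues (with multiplicity) of a real symmetric matrix. -/
noncomputable def negEig {m : Type} [Fintype m] [DecidableEq m] (M : Matrix m m ℝ) : ℕ :=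
  if h : M.IsHermitian then (Finset.univ.filter (fun i => h.eigenvalues i < 0)).card else 0

/-- A sum-and-difference-of-squares decomposition of `q` with `σ` positive and `τ`
negative squares, with all factors linear in `h`. -/
def IsSDS (q : NC3 g) (σ τ : ℕ) : Prop :=
  ∃ (f : Fin σ → NC3 g) (r : Fin τ → NC3 g),
    (∀ j, hHomog3 (f j) 1) ∧ (∀ l, hHomog3 (r l) 1) ∧
    q = (∑ j, ncT3 (f j) * f j) - ∑ l, ncT3 (r l) * r l

/-- `σ₊(q)`: the minimal number of positive squares in an SDS decomposition of `q`. -/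
noncomputable def sigmaPlus (q : NC3 g) : ℕ := sInf {σ | ∃ τ, IsSDS q σ τ}

/-- `σ₋(q)`: the minimal number of negative squares in an SDS decomposition of `q`. -/
noncomputable def sigmaMinus (q : NC3 g) : ℕ := sInf {τ | ∃ σ, IsSDS q σ τ}

/-- The monomials `a_i x_j` (for `false`) and `x_j a_i` (for `true`). -/
noncomputable def Vmono (g : ℕ) : Bool × Fin g × Fin g → NC2 g :=
  fun m => match m with
  | (false, i, j) => MonoidAlgebra.of ℝ (Word2 g) (FreeMonoid.ofList [Sum.inl i, Sum.inr j])
  | (true, i, j) => MonoidAlgebra.of ℝ (Word2 g) (FreeMonoid.ofList [Sum.inr j, Sum.inl i])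

/-- The vector `W(x)` with entries `1, x_1, …, x_g`. -/
noncomputable def Wmono (g : ℕ) : Option (Fin g) → NC2 g :=
  fun o => match o with
  | none => 1
  | some i => ltr (Sum.inr i)

/-- The subspace of symmetric `n × n` matrices. -/
def symmSub (n : ℕ) : Submodule ℝ (Matrix (Fin n) (Fin n) ℝ) where
  carrier := {H | H.IsSymm}
  add_mem' := fun ha hb => ha.add hb
  zero_mem' := Matrix.isSymm_zero
  smul_mem' := fun c _ ha => ha.smul c

/-- The linear map `H ↦ (H z_1, …, H z_d)`. -/
noncomputable def stackMap (n d : ℕ) (z : Fin d → Fin n → ℝ) :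
    Matrix (Fin n) (Fin n) ℝ →ₗ[ℝ] (Fin d → Fin n → ℝ) where
  toFun H := fun j => H.mulVec (z j)
  map_add' := fun H K => by funext j; simp [Matrix.add_mulVec]
  map_smul' := fun c H => by funext j; simp [Matrix.smul_mulVec]

/-- The linear map `H ↦ ⊕_j (H_j z_1, …, H_j z_d)`. -/
noncomputable def stackMapG (g n d : ℕ) (z : Fin d → Fin n → ℝ) :
    (Fin g → Matrix (Fin n) (Fin n) ℝ) →ₗ[ℝ] (Fin g → Fin d → Fin n → ℝ) where
  toFun H := fun j i => (H j).mulVec (z i)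
  map_add' := fun H K => by funext j i; simp [Matrix.add_mulVec]
  map_smul' := fun c H => by funext j i; simp [Matrix.smul_mulVec]

end NCConvexity

open NCConvexity

namespace NCAux
open NCConvexity

/-! ### Part A: a multivariate polynomial vanishing on a nonempty open set vanishes. -/

open Polynomial in
lemma mv_vanish {σ : Type*} (q : MvPolynomial σ ℝ) (V : Set (σ → ℝ)) (hV : IsOpen V)
    (hne : V.Nonempty) (h : ∀ b ∈ V, MvPolynomial.eval b q = 0) (x : σ → ℝ) :
    MvPolynomial.eval x q = 0 := by
  obtain ⟨a, ha⟩ := hne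
  set L : ℝ → (σ → ℝ) := fun t s => a s + t * (x s - a s) with hL
  have hLc : Continuous L := by
    apply continuous_pi; intro s; fun_prop
  set Q : Polynomial ℝ :=
    MvPolynomial.aeval (fun s => Polynomial.C (a s) + Polynomial.C (x s - a s) * Polynomial.X) q
    with hQ
  have hQt : ∀ t, Q.eval t = MvPolynomial.eval (L t) q := by
    intro t
    have : (Polynomial.evalRingHom t).comp
        ((MvPolynomial.aeval (R := ℝ)
          (fun s => Polynomial.C (a s) + Polynomial.C (x s - a s) * Polynomial.X)).toRingHom)
        = MvPolynomial.eval (L t) := by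
      apply MvPolynomial.ringHom_ext
      · intro r; simp
      · intro s; simp [hL]; ring
    exact RingHom.congr_fun this q
  have h0 : L 0 = a := by funext s; simp [hL]
  have hop : IsOpen (L ⁻¹' V) := hV.preimage hLc
  have h0m : (0 : ℝ) ∈ L ⁻¹' V := by simp [h0, ha]
  obtain ⟨ε, hε, hball⟩ := Metric.isOpen_iff.mp hop 0 h0m
  have hroots : {t : ℝ | Q.IsRoot t}.Infinite := by
    apply Set.Infinite.mono (s := Set.Ioo (-ε) ε)
    · intro t ht
      have hm : t ∈ Metric.ball (0:ℝ) ε := by rw [Real.ball_eq_Ioo]; simpa using ht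
      show Q.IsRoot t
      rw [Polynomial.IsRoot, hQt t]; exact h _ (hball hm)
    · exact Set.Ioo_infinite (by linarith)
  have hQ0 : Q = 0 := Polynomial.eq_zero_of_infinite_isRoot Q hroots
  have := hQt 1
  rw [hQ0] at this
  simp at this
  have h1 : L 1 = x := by funext s; simp [hL]
  rw [h1] at this
  exact this.symm

/-! ### Part B: evaluation of `p` is a polynomial function of the matrix entries. -/

variable {g : ℕ} {m : Type} [Fintype m] [DecidableEq m]

/-- product of a list of letters evaluated at matrices over a comm ring -/
def listP {R : Type*} [CommRing R] (w : List (Fin g)) (M : Fin g → Matrix m m R) :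
    Matrix m m R := (w.map M).prod

lemma map_listP {R S : Type*} [CommRing R] [CommRing S] (f : R →+* S)
    (w : List (Fin g)) (M : Fin g → Matrix m m R) :
    (listP w M).map f = listP w (fun k => (M k).map f) := by
  induction w with
  | nil => simp [listP, Matrix.map_one f f.map_zero f.map_one]
  | cons k w ih => simp only [listP, List.map_cons, List.prod_cons, Matrix.map_mul] at *; rw [ih]

/-- Generic evaluation of `p` at matrices with polynomial entries. -/
noncomputable def genEval {σ : Type*} (p : NC1 g) (M : Fin g → Matrix m m (MvPolynomial σ ℝ)) :
    Matrix m m (MvPolynomial σ ℝ) :=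
  Finsupp.sum p.coeff (fun w c => (MvPolynomial.C c : MvPolynomial σ ℝ) • listP (FreeMonoid.toList w) M)

lemma eval_genEval {σ : Type*} (p : NC1 g) (M : Fin g → Matrix m m (MvPolynomial σ ℝ))
    (b : σ → ℝ) (i j : m) :
    MvPolynomial.eval b (genEval p M i j)
      = eval1 p (fun k => (M k).map (MvPolynomial.eval b)) i j := by
  classical
  rw [genEval, eval1, Finsupp.sum, Finsupp.sum]
  rw [Matrix.sum_apply, map_sum, Matrix.sum_apply]
  apply Finset.sum_congr rfl
  intro w _
  have h1 : ((MvPolynomial.C (p.coeff w) : MvPolynomial σ ℝ) •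
      listP (FreeMonoid.toList w) M) i j
      = MvPolynomial.C (p.coeff w) * listP (FreeMonoid.toList w) M i j := rfl
  rw [h1, map_mul, MvPolynomial.eval_C]
  have h3 : MvPolynomial.eval b (listP (FreeMonoid.toList w) M i j)
      = listP (FreeMonoid.toList w) (fun k => (M k).map (MvPolynomial.eval b)) i j := by
    have := map_listP (MvPolynomial.eval b : MvPolynomial σ ℝ →+* ℝ) (FreeMonoid.toList w) M
    exact congrFun (congrFun (congrArg (fun N : Matrix m m ℝ => (N : m → m → ℝ)) this) i) j
  rw [h3]
  rfl

/-! ### Part C: vanishing on a nonempty open set of symmetric tuples implies vanishing on all. -/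

lemma vanish_symm {g n : ℕ} (p : NC1 g)
    (U : Set (Fin g → Matrix (Fin n) (Fin n) ℝ))
    (hne : U.Nonempty) (hUsym : ∀ A ∈ U, IsSymTuple A)
    (hUopen : IsOpen ((Subtype.val :
        {A : Fin g → Matrix (Fin n) (Fin n) ℝ // IsSymTuple A} →
        (Fin g → Matrix (Fin n) (Fin n) ℝ)) ⁻¹' U))
    (hvan : ∀ A ∈ U, eval1 p A = 0) :
    ∀ A : Fin g → Matrix (Fin n) (Fin n) ℝ, IsSymTuple A → eval1 p A = 0 := by
  classical
  set σ : Type := Fin g × Fin n × Fin n with hσ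
  -- symmetrization of a coordinate vector into a symmetric tuple
  set Φ : (σ → ℝ) → (Fin g → Matrix (Fin n) (Fin n) ℝ) :=
    fun b k => Matrix.of fun a c => (b (k, a, c) + b (k, c, a)) / 2 with hΦ
  have hΦsym : ∀ b, IsSymTuple (Φ b) := by
    intro b k
    rw [Matrix.IsSymm]
    ext a c
    simp [hΦ, Matrix.transpose_apply, add_comm]
  have hΦc : Continuous Φ := by
    apply continuous_pi; intro k
    apply continuous_pi; intro a
    apply continuous_pi; intro c
    show Continuous fun b : σ → ℝ => (b (k, a, c) + b (k, c, a)) / 2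
    fun_prop
  -- coordinates of a symmetric tuple
  have hΦA : ∀ A : Fin g → Matrix (Fin n) (Fin n) ℝ, IsSymTuple A →
      Φ (fun s => A s.1 s.2.1 s.2.2) = A := by
    intro A hA
    funext k
    ext a c
    have h2 : A k c a = A k a c := by
      simpa [Matrix.transpose_apply] using congrFun (congrFun (hA k) a) c
    simp only [hΦ, Matrix.of_apply, h2]
    ring
  -- the generic symmetric matrices
  set Mgen : Fin g → Matrix (Fin n) (Fin n) (MvPolynomial σ ℝ) :=
    fun k => Matrix.of fun a c =>
      MvPolynomial.C (1/2 : ℝ) * (MvPolynomial.X (k, a, c) + MvPolynomial.X (k, c, a))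
    with hM
  have hMev : ∀ b k, (Mgen k).map (MvPolynomial.eval b) = Φ b k := by
    intro b k
    ext a c
    simp [hM, hΦ, Matrix.map_apply]
    ring
  -- the open set in coordinates
  set Ψ : (σ → ℝ) → {A : Fin g → Matrix (Fin n) (Fin n) ℝ // IsSymTuple A} :=
    fun b => ⟨Φ b, hΦsym b⟩ with hΨ
  have hΨc : Continuous Ψ := Continuous.subtype_mk hΦc _
  set V : Set (σ → ℝ) := Ψ ⁻¹' (Subtype.val ⁻¹' U) with hV
  have hVopen : IsOpen V := hUopen.preimage hΨc
  have hVne : V.Nonempty := by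
    obtain ⟨A, hA⟩ := hne
    refine ⟨fun s => A s.1 s.2.1 s.2.2, ?_⟩
    show Ψ (fun s => A s.1 s.2.1 s.2.2) ∈ Subtype.val ⁻¹' U
    show Φ (fun s => A s.1 s.2.1 s.2.2) ∈ U
    rw [hΦA A (hUsym A hA)]
    exact hA
  -- conclude entrywise
  intro A hA
  ext i j
  have key : ∀ b : σ → ℝ, MvPolynomial.eval b (genEval p Mgen i j) = eval1 p (Φ b) i j := by
    intro b
    rw [eval_genEval]
    congr 1
    funext k
    exact hMev b k
  have hvV : ∀ b ∈ V, MvPolynomial.eval b (genEval p Mgen i j) = 0 := by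
    intro b hb
    rw [key b]
    have : Φ b ∈ U := hb
    rw [hvan _ this]
    simp
  have := mv_vanish (genEval p Mgen i j) V hVopen hVne hvV (fun s => A s.1 s.2.1 s.2.2)
  rw [key] at this
  rw [hΦA A hA] at this
  simpa using this

/-! ### Part D: words of length at most `d`. -/

/-- Words (lists) of length at most `d` in `g` letters. -/
abbrev Wd (g d : ℕ) := {w : List (Fin g) // w.length ≤ d}

noncomputable instance wdFintype (g d : ℕ) : Fintype (Wd g d) :=
  Fintype.ofInjective
    (fun w => fun i : Fin d => w.1[(i : ℕ)]?)
    (by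
      rintro ⟨a, ha⟩ ⟨b, hb⟩ h
      apply Subtype.ext
      apply List.ext_getElem?
      intro i
      by_cases hi : i < d
      · exact congrFun h ⟨i, hi⟩
      · rw [List.getElem?_eq_none (le_trans ha (le_of_not_gt hi)),
          List.getElem?_eq_none (le_trans hb (le_of_not_gt hi))])

lemma wd_card (g d : ℕ) : Fintype.card (Wd g d) = Ngd g d := by
  classical
  have hbij : Function.Bijective
      (fun s : (Σ j : Fin (d+1), (Fin j → Fin g)) =>
        (⟨List.ofFn s.2, by simpa using Nat.lt_succ_iff.mp s.1.2⟩ : Wd g d)) := by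
    constructor
    · rintro ⟨j, f⟩ ⟨j', f'⟩ h
      simp only [Subtype.mk.injEq] at h
      have hl : (j : ℕ) = (j' : ℕ) := by
        have := congrArg List.length h
        simpa using this
      have hj : j = j' := Fin.ext hl
      subst hj
      have hf : f = f' := List.ofFn_injective h
      rw [hf]
    · rintro ⟨w, hw⟩
      refine ⟨⟨⟨w.length, Nat.lt_succ_of_le hw⟩, fun i => w[(i : ℕ)]⟩, ?_⟩
      apply Subtype.ext
      simp
  have := Fintype.card_of_bijective hbij
  rw [← this, Fintype.card_sigma]
  rw [Ngd, ← Fin.sum_univ_eq_sum_range (fun j => g ^ j)]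
  apply Finset.sum_congr rfl
  intro j _
  simp [Fintype.card_fun]

variable {d : ℕ}

/-- The symmetric "shift" matrices on words of length at most `d`. -/
noncomputable def Sh (g d : ℕ) (k : Fin g) : Matrix (Wd g d) (Wd g d) ℝ :=
  Matrix.of fun u v => (if u.1 = k :: v.1 then (1:ℝ) else 0) + (if v.1 = k :: u.1 then 1 else 0)

lemma Sh_symm (g d : ℕ) (k : Fin g) : (Sh g d k).IsSymm := by
  rw [Matrix.IsSymm]
  ext u v
  simp only [Matrix.transpose_apply, Sh, Matrix.of_apply]
  rw [add_comm]

lemma Sh_key {g : ℕ} (w : List (Fin g)) :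
    ∀ (u v : Wd g d), w.length + v.1.length ≤ u.1.length →
      ((w.map (Sh g d)).prod) u v = if u.1 = w ++ v.1 then (1:ℝ) else 0 := by
  classical
  induction w with
  | nil =>
    intro u v _
    simp only [List.map_nil, List.prod_nil, List.nil_append]
    rw [Matrix.one_apply]
    by_cases h : u = v
    · simp [h]
    · have : u.1 ≠ v.1 := fun hh => h (Subtype.ext hh)
      simp [h, this]
  | cons k w ih =>
    intro u v hlen
    simp only [List.map_cons, List.prod_cons]
    rw [Matrix.mul_apply]
    have hterm : ∀ z : Wd g d,
        Sh g d k u z * ((w.map (Sh g d)).prod) z v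
          = (if u.1 = k :: z.1 then ((w.map (Sh g d)).prod) z v else 0) := by
      intro z
      simp only [Sh, Matrix.of_apply]
      rw [add_mul]
      have h2 : (if z.1 = k :: u.1 then (1:ℝ) else 0) * ((w.map (Sh g d)).prod) z v = 0 := by
        by_cases hz : z.1 = k :: u.1
        · have hlz : w.length + v.1.length ≤ z.1.length := by
            rw [hz]; simp at hlen ⊢; omega
          rw [ih z v hlz]
          have : z.1 ≠ w ++ v.1 := by
            intro hzz
            have l1 := congrArg List.length hzz
            have l2 := congrArg List.length hz
            simp at l1 l2 hlen
            omega
          simp [this]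
        · simp [hz]
      rw [h2, add_zero]
      by_cases hz : u.1 = k :: z.1 <;> simp [hz]
    rw [Finset.sum_congr rfl (fun z _ => hterm z)]
    -- now case on the shape of u
    match hu : u.1 with
    | [] =>
      exfalso
      rw [hu] at hlen
      simp at hlen
    | k' :: t =>
      have htd : t.length ≤ d := by
        have := u.2
        rw [hu] at this
        simp at this
        omega
      by_cases hk : k' = k
      · subst hk
        set z0 : Wd g d := ⟨t, htd⟩ with hz0
        have hcond : ∀ z : Wd g d, (u.1 = k' :: z.1) ↔ z = z0 := by
          intro z
          constructor
          · intro h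
            rw [hu] at h
            apply Subtype.ext
            simpa using h.symm
          · intro h
            rw [h, hu]
        have : ∀ z : Wd g d,
            (if u.1 = k' :: z.1 then ((w.map (Sh g d)).prod) z v else 0)
              = (if z = z0 then ((w.map (Sh g d)).prod) z v else 0) := by
          intro z
          by_cases h : z = z0
          · simp [h, (hcond z).mpr h]
          · have : ¬ (u.1 = k' :: z.1) := fun hh => h ((hcond z).mp hh)
            simp [h, this]
        simp only [hu] at this
        rw [Finset.sum_congr rfl (fun z _ => this z)]
        rw [Finset.sum_ite_eq' Finset.univ z0]
        simp only [Finset.mem_univ, if_true]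
        have hlz0 : w.length + v.1.length ≤ z0.1.length := by
          rw [hu] at hlen
          simp [hz0] at hlen ⊢
          omega
        rw [ih z0 v hlz0]
        show (if t = w ++ v.1 then (1:ℝ) else 0) = _
        simp only [List.cons_append, List.cons.injEq, true_and]
      · have hall : ∀ z : Wd g d,
            (if (k' :: t : List (Fin g)) = k :: z.1 then ((w.map (Sh g d)).prod) z v else 0)
              = 0 := by
          intro z
          have : ¬ ((k' :: t : List (Fin g)) = k :: z.1) := by
            intro hh; exact hk (by injection hh)
          simp [this]
        rw [Finset.sum_congr rfl (fun z _ => hall z), Finset.sum_const_zero]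
        have : ¬ ((k' :: t : List (Fin g)) = (k :: w) ++ v.1) := by
          intro hh
          exact hk (by injection hh)
        simp [this, hk]

lemma eval1_apply {g : ℕ} {m : Type} [Fintype m] [DecidableEq m]
    (p : NC1 g) (A : Fin g → Matrix m m ℝ) (i j : m) :
    eval1 p A i j = ∑ w ∈ p.coeff.support, p.coeff w * (((FreeMonoid.toList w).map A).prod) i j := by
  rw [eval1, Finsupp.sum, Matrix.sum_apply]
  apply Finset.sum_congr rfl
  intro w _
  simp [Matrix.smul_apply]

lemma prod_submatrix {g : ℕ} {m m' : Type} [Fintype m] [DecidableEq m] [Fintype m']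
    [DecidableEq m'] (S : Fin g → Matrix m m ℝ) (f : m' ≃ m) (w : List (Fin g)) :
    ((w.map (fun k => (S k).submatrix f f)).prod) = ((w.map S).prod).submatrix f f := by
  induction w with
  | nil => simp [Matrix.submatrix_one_equiv]
  | cons k w ih =>
    simp only [List.map_cons, List.prod_cons, ih]
    rw [Matrix.submatrix_mul_equiv]

end NCAux

/-- a polynomial of degree `d` in `g` letters vanishing on a nonempty open
subset of `S_{N(g,d)}(ℝ^g)` is zero. -/
theorem statement7 (g d : ℕ) (hg : 1 ≤ g) (p : NC1 g) (hd : degree1 p = d)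
    (U : Set (Fin g → Matrix (Fin (Ngd g d)) (Fin (Ngd g d)) ℝ))
    (hne : U.Nonempty) (hUsym : ∀ A ∈ U, IsSymTuple A)
    (hUopen : IsOpen ((Subtype.val :
        {A : Fin g → Matrix (Fin (Ngd g d)) (Fin (Ngd g d)) ℝ // IsSymTuple A} →
        (Fin g → Matrix (Fin (Ngd g d)) (Fin (Ngd g d)) ℝ)) ⁻¹' U))
    (hvan : ∀ A ∈ U, eval1 p A = 0) :
    p = 0 := by
  classical
  have hvanall : ∀ A : Fin g → Matrix (Fin (Ngd g d)) (Fin (Ngd g d)) ℝ,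
      IsSymTuple A → eval1 p A = 0 :=
    NCAux.vanish_symm p U hne hUsym hUopen hvan
  by_contra hp
  have hsupp : p.coeff.support.Nonempty := Finsupp.support_nonempty_iff.mpr (by simpa using hp)
  obtain ⟨u₀, hu₀mem, hu₀⟩ :=
    Finset.exists_mem_eq_sup p.coeff.support hsupp (fun w => (FreeMonoid.toList w).length)
  have hu₀len : (FreeMonoid.toList u₀).length = d := by
    rw [← hd, degree1, hu₀]
  set e : NCAux.Wd g d ≃ Fin (Ngd g d) := Fintype.equivFinOfCardEq (NCAux.wd_card g d) with he
  set A : Fin g → Matrix (Fin (Ngd g d)) (Fin (Ngd g d)) ℝ :=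
    fun k => (NCAux.Sh g d k).submatrix e.symm e.symm with hA
  have hAsym : IsSymTuple A := by
    intro k
    rw [Matrix.IsSymm, hA]
    rw [Matrix.transpose_submatrix, (NCAux.Sh_symm g d k)]
  have hz := hvanall A hAsym
  set u' : NCAux.Wd g d := ⟨FreeMonoid.toList u₀, le_of_eq hu₀len⟩ with hu'
  set v' : NCAux.Wd g d := ⟨[], Nat.zero_le d⟩ with hv'
  have hent : eval1 p A (e u') (e v') = 0 := by rw [hz]; rfl
  rw [NCAux.eval1_apply] at hent
  have hterm : ∀ w ∈ p.coeff.support,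
      p.coeff w * (((FreeMonoid.toList w).map A).prod) (e u') (e v')
        = p.coeff w * (if u'.1 = (FreeMonoid.toList w) ++ v'.1 then (1:ℝ) else 0) := by
    intro w hw
    congr 1
    rw [hA, NCAux.prod_submatrix]
    simp only [Matrix.submatrix_apply, Equiv.symm_apply_apply]
    apply NCAux.Sh_key
    have hle : (FreeMonoid.toList w).length ≤ d := by
      rw [← hd, degree1]
      exact Finset.le_sup (f := fun w => (FreeMonoid.toList w).length) hw
    simp [hu', hv', hu₀len, hle]
  rw [Finset.sum_congr rfl hterm] at hent
  have hsingle : ∑ w ∈ p.coeff.support,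
      p.coeff w * (if u'.1 = (FreeMonoid.toList w) ++ v'.1 then (1:ℝ) else 0) = p.coeff u₀ := by
    have h1 : ∀ w ∈ p.coeff.support, w ≠ u₀ →
        p.coeff w * (if u'.1 = (FreeMonoid.toList w) ++ v'.1 then (1:ℝ) else 0) = 0 := by
      intro w hw hne'
      have : ¬ (u'.1 = (FreeMonoid.toList w) ++ v'.1) := by
        simp only [hu', hv', List.append_nil]
        intro hh
        exact hne' (FreeMonoid.toList.injective hh.symm)
      rw [if_neg this, mul_zero]
    rw [Finset.sum_eq_single u₀ h1 (fun h => absurd hu₀mem h)]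
    simp [hu', hv']
  rw [hsingle] at hent
  exact (Finsupp.mem_support_iff.mp hu₀mem) hent
end

section
/- Let W be a domain in S(ℝ^g × ℝ^g) and let d_a, d_x be natural numbers with d_x ≥ 2. Then either there exist an n, a pair (A,X) ∈ W_n, and a vector v ∈ ℝ^n such that the set {m(A,X)v : m a word in the letters (a,x) with at most d_x − 2 x-letters and at most d_a a-letters} is linearly independent in ℝ^n, or there exists a nonzero noncommutative polynomial q (not necessarily symmetric) of degree at most d_a in a and at most d_x − 2 in x such that q(A,X) = 0 for every n and every (A,X) ∈ W_n. -/
open scoped BigOperators Kronecker Matrix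

namespace NCConvexity

variable {g : ℕ}

/-! ### Auxiliary material for `statement9`. -/

noncomputable def catVec {n m : ℕ} (v : Fin n → ℝ) (w : Fin m → ℝ) : Fin (n + m) → ℝ :=
  fun i => Sum.elim v w (finSumFinEquiv.symm i)

lemma catVec_eq_zero_iff {n m : ℕ} (v : Fin n → ℝ) (w : Fin m → ℝ) :
    catVec v w = 0 ↔ v = 0 ∧ w = 0 := by
  constructor
  · intro h
    constructor
    · funext j; have := congrFun h (finSumFinEquiv (Sum.inl j)); simpa [catVec] using this
    · funext j; have := congrFun h (finSumFinEquiv (Sum.inr j)); simpa [catVec] using this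
  · rintro ⟨rfl, rfl⟩; funext i; rcases finSumFinEquiv.symm i with j | j <;> simp [catVec]

lemma dirSum_one {n m : ℕ} :
    dirSum (1 : Matrix (Fin n) (Fin n) ℝ) (1 : Matrix (Fin m) (Fin m) ℝ) = 1 := by
  simp [dirSum, Matrix.fromBlocks_one]

lemma dirSum_mul {n m : ℕ} (M M' : Matrix (Fin n) (Fin n) ℝ) (N N' : Matrix (Fin m) (Fin m) ℝ) :
    dirSum M N * dirSum M' N' = dirSum (M * M') (N * N') := by
  simp [dirSum, Matrix.reindex_apply, Matrix.submatrix_mul_equiv, Matrix.fromBlocks_multiply]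

lemma listEval_dirSum {n m : ℕ} (w : List (L2 g)) (A X : MatTuple g n) (B Y : MatTuple g m) :
    listEval w (tupDirSum A B) (tupDirSum X Y) = dirSum (listEval w A X) (listEval w B Y) := by
  induction w with
  | nil => simpa [listEval] using dirSum_one.symm
  | cons hd tl ih =>
    have hhd : Sum.elim (tupDirSum A B) (tupDirSum X Y) hd
        = dirSum (Sum.elim A X hd) (Sum.elim B Y hd) := by cases hd <;> rfl
    simp only [listEval, List.map_cons, List.prod_cons] at *
    rw [hhd, ih, dirSum_mul]

lemma dirSum_mulVec {n m : ℕ} (M : Matrix (Fin n) (Fin n) ℝ) (N : Matrix (Fin m) (Fin m) ℝ)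
    (v : Fin n → ℝ) (w : Fin m → ℝ) :
    dirSum M N *ᵥ catVec v w = catVec (M *ᵥ v) (N *ᵥ w) := by
  unfold dirSum catVec
  rw [Matrix.reindex_apply, Matrix.submatrix_mulVec_equiv]
  funext i
  simp [Matrix.fromBlocks_mulVec, Function.comp_def]

noncomputable def Lmap (k d : ℕ) {n : ℕ} (A X : MatTuple g n) (v : Fin n → ℝ) :
    (BWords g k d → ℝ) →ₗ[ℝ] (Fin n → ℝ) :=
  ∑ m : BWords g k d, (LinearMap.proj m).smulRight ((listEval m.1 A X).mulVec v)

lemma Lmap_apply (k d : ℕ) {n : ℕ} (A X : MatTuple g n) (v : Fin n → ℝ)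
    (c : BWords g k d → ℝ) :
    Lmap k d A X v c = ∑ m : BWords g k d, c m • ((listEval m.1 A X).mulVec v) := by
  simp [Lmap]

lemma Lmap_dirSum (k d : ℕ) {n m : ℕ} (A X : MatTuple g n) (B Y : MatTuple g m)
    (v : Fin n → ℝ) (w : Fin m → ℝ) (c : BWords g k d → ℝ) :
    Lmap k d (tupDirSum A B) (tupDirSum X Y) (catVec v w) c
      = catVec (Lmap k d A X v c) (Lmap k d B Y w c) := by
  simp only [Lmap_apply]
  have key : ∀ mm : BWords g k d,
      (listEval mm.1 (tupDirSum A B) (tupDirSum X Y)).mulVec (catVec v w)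
        = catVec ((listEval mm.1 A X).mulVec v) ((listEval mm.1 B Y).mulVec w) := by
    intro mm; rw [listEval_dirSum, dirSum_mulVec]
  funext i
  rcases h : finSumFinEquiv.symm i with j | j <;>
    simp only [catVec, Finset.sum_apply, Pi.smul_apply, h, Sum.elim_inl, Sum.elim_inr,
      smul_eq_mul] <;>
    exact Finset.sum_congr rfl fun mm _ => by rw [key]; simp [catVec, h]

lemma ker_Lmap_dirSum (k d : ℕ) {n m : ℕ} (A X : MatTuple g n) (B Y : MatTuple g m)
    (v : Fin n → ℝ) (w : Fin m → ℝ) :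
    LinearMap.ker (Lmap k d (tupDirSum A B) (tupDirSum X Y) (catVec v w))
      = LinearMap.ker (Lmap k d A X v) ⊓ LinearMap.ker (Lmap k d B Y w) := by
  ext c
  simp [LinearMap.mem_ker, Lmap_dirSum, catVec_eq_zero_iff]

lemma eval_sum_single {ι : Type*} (s : Finset ι) (w : ι → Word2 g) (c : ι → ℝ)
    {m' : Type} [Fintype m'] [DecidableEq m'] (A X : Fin g → Matrix m' m' ℝ) :
    eval (MonoidAlgebra.ofCoeff (∑ i ∈ s, Finsupp.single (w i) (c i))) A X = ∑ i ∈ s, c i • wordEval (w i) A X := by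
  have hev : ∀ p : NC2 g, eval p A X
      = Finsupp.lsum ℝ (fun u => LinearMap.toSpanSingleton ℝ _ (wordEval u A X)) p.coeff := by
    intro p
    rw [Finsupp.lsum_apply]
    rfl
  rw [hev, MonoidAlgebra.coeff_ofCoeff, map_sum]
  refine Finset.sum_congr rfl fun i _ => ?_
  rw [Finsupp.lsum_single, LinearMap.toSpanSingleton_apply]

end NCConvexity

open NCConvexity

/-- on a domain `W`, either some `(A,X) ∈ W` and vector `v` make the monomials
`m(A,X)v` (with `deg_x m ≤ d_x − 2`, `deg_a m ≤ d_a`) linearly independent, or some nonzero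
polynomial of degree at most `d_a` in `a` and `d_x − 2` in `x` vanishes on `W`. -/
theorem statement9 (g : ℕ) (hg : 1 ≤ g)
    (W : (n : ℕ) → Set (MatTuple g n × MatTuple g n))
    (hWsym : ∀ n, ∀ AX ∈ W n, IsSymTuple AX.1 ∧ IsSymTuple AX.2)
    (hWsum : ∀ (n m : ℕ) (A X : MatTuple g n) (B Y : MatTuple g m),
      (A, X) ∈ W n → (B, Y) ∈ W m → (tupDirSum A B, tupDirSum X Y) ∈ W (n + m))
    (da dx : ℕ) (hdx : 2 ≤ dx) :
    (∃ (n : ℕ) (A X : MatTuple g n) (v : Fin n → ℝ), (A, X) ∈ W n ∧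
      LinearIndependent ℝ (fun m : BWords g (dx - 2) da => (listEval m.1 A X).mulVec v)) ∨
    (∃ q : NC2 g, q ≠ 0 ∧ aDegLe q da ∧ xDegLe q (dx - 2) ∧
      ∀ (n : ℕ), ∀ AX ∈ W n, eval q AX.1 AX.2 = 0) := by
  classical
  by_cases hpt : ∃ (n : ℕ) (A X : MatTuple g n), (A, X) ∈ W n
  swap
  · right
    refine ⟨MonoidAlgebra.single 1 1, ?_, ?_, ?_, ?_⟩
    · intro h; exact one_ne_zero (α := ℝ) (MonoidAlgebra.single_eq_zero.mp h)
    · intro w hw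
      rw [MonoidAlgebra.coeff_single] at hw
      rw [Finsupp.support_single_ne_zero _ one_ne_zero, Finset.mem_singleton] at hw
      subst hw
      simp [aCount, aCountL]
    · intro w hw
      rw [MonoidAlgebra.coeff_single] at hw
      rw [Finsupp.support_single_ne_zero _ one_ne_zero, Finset.mem_singleton] at hw
      subst hw
      simp [xCount, xCountL]
    · intro n AX hAX
      exact absurd ⟨n, AX.1, AX.2, hAX⟩ hpt
  obtain ⟨n0, A0, X0, hW0⟩ := hpt
  by_cases hLI : (∃ (n : ℕ) (A X : MatTuple g n) (v : Fin n → ℝ), (A, X) ∈ W n ∧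
      LinearIndependent ℝ (fun m : BWords g (dx - 2) da => (listEval m.1 A X).mulVec v))
  · exact Or.inl hLI
  push_neg at hLI
  right
  set k := dx - 2 with hk
  -- the set of kernels
  set S : Set (Submodule ℝ (BWords g k da → ℝ)) :=
    {K | ∃ (n : ℕ) (A X : MatTuple g n) (v : Fin n → ℝ), (A, X) ∈ W n ∧
      K = LinearMap.ker (Lmap k da A X v)} with hS
  have hSne : S.Nonempty := ⟨_, n0, A0, X0, 0, hW0, rfl⟩
  obtain ⟨K0, hK0S, hmin⟩ := IsArtinian.set_has_minimal S hSne
  obtain ⟨n1, A1, X1, v1, hW1, rfl⟩ := hK0S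
  -- minimal kernel is contained in every kernel
  have hK0le : ∀ (n : ℕ) (A X : MatTuple g n) (v : Fin n → ℝ), (A, X) ∈ W n →
      LinearMap.ker (Lmap k da A1 X1 v1) ≤ LinearMap.ker (Lmap k da A X v) := by
    intro n A X v hAX
    have hmem : LinearMap.ker (Lmap k da A1 X1 v1) ⊓ LinearMap.ker (Lmap k da A X v) ∈ S :=
      ⟨n1 + n, tupDirSum A1 A, tupDirSum X1 X, catVec v1 v,
        hWsum n1 n A1 X1 A X hW1 hAX, (ker_Lmap_dirSum k da A1 X1 A X v1 v).symm⟩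
    have hnlt := hmin _ hmem
    have hle : LinearMap.ker (Lmap k da A1 X1 v1) ⊓ LinearMap.ker (Lmap k da A X v)
        ≤ LinearMap.ker (Lmap k da A1 X1 v1) := inf_le_left
    rcases hle.lt_or_eq with h | h
    · exact absurd h hnlt
    · rw [← h]; exact inf_le_right
  -- a nonzero kernel element
  have hnLI := hLI n1 A1 X1 v1 hW1
  rw [Fintype.not_linearIndependent_iff] at hnLI
  obtain ⟨c, hsum, i0, hi0⟩ := hnLI
  have hcker : c ∈ LinearMap.ker (Lmap k da A1 X1 v1) := by
    rw [LinearMap.mem_ker, Lmap_apply]; exact hsum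
  -- the polynomial
  refine ⟨MonoidAlgebra.ofCoeff (∑ m : BWords g k da, Finsupp.single (FreeMonoid.ofList m.1) (c m)), ?_, ?_, ?_, ?_⟩
  · intro h0
    rw [MonoidAlgebra.ofCoeff_eq_zero] at h0
    have happ : (∑ m : BWords g k da, Finsupp.single (FreeMonoid.ofList m.1) (c m))
        (FreeMonoid.ofList i0.1) = c i0 := by
      rw [Finsupp.finset_sum_apply, Finset.sum_eq_single i0]
      · simp
      · intro b _ hb
        rw [Finsupp.single_apply, if_neg]
        intro h
        exact hb (Subtype.ext (FreeMonoid.ofList.injective h))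
      · intro h; exact absurd (Finset.mem_univ i0) h
    rw [h0] at happ
    simp at happ
    exact hi0 happ.symm
  · intro w hw
    have hne := Finsupp.mem_support_iff.mp hw
    rw [Finsupp.finset_sum_apply] at hne
    obtain ⟨m, -, hm⟩ := Finset.exists_ne_zero_of_sum_ne_zero hne
    rw [Finsupp.single_apply] at hm
    by_cases h : FreeMonoid.ofList m.1 = w
    · subst h; simpa [aCount, FreeMonoid.toList_ofList] using m.2.2
    · rw [if_neg h] at hm; exact absurd rfl hm
  · intro w hw
    have hne := Finsupp.mem_support_iff.mp hw
    rw [Finsupp.finset_sum_apply] at hne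
    obtain ⟨m, -, hm⟩ := Finset.exists_ne_zero_of_sum_ne_zero hne
    rw [Finsupp.single_apply] at hm
    by_cases h : FreeMonoid.ofList m.1 = w
    · subst h; simpa [xCount, FreeMonoid.toList_ofList] using m.2.1
    · rw [if_neg h] at hm; exact absurd rfl hm
  · rintro n ⟨A, X⟩ hAX
    rw [eval_sum_single]
    ext i j
    have hc := hK0le n A X (Pi.single j 1) hAX hcker
    rw [LinearMap.mem_ker, Lmap_apply] at hc
    have hci := congrFun hc i
    simp only [Finset.sum_apply, Pi.smul_apply, Matrix.mulVec_single, mul_one, smul_eq_mul,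
      Pi.zero_apply] at hci
    simpa [wordEval, FreeMonoid.toList_ofList, Matrix.sum_apply] using hci
end

section
/- Let q(a,x)[h] be a symmetric noncommutative polynomial in the 3g letters (a,x,h) that has degree ℓ in x and is homogeneous of degree two in h, and let Z(a,x) be its middle matrix with respect to the border vector. Then for every n and every (A,X) ∈ S_n(ℝ^g) × S_n(ℝ^g), the number of positive (respectively, negative) eigenvalues of the symmetric matrix Z(A,X), counted with multiplicity, satisfies μ_±(Z(A,X)) ≤ n·σ_±(q). -/
open scoped BigOperators Kronecker Matrix

/-! ### Auxiliary machinery -/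

namespace NCConvexity

variable {g : ℕ}

/-- Embedding of `(a,x)`-letters into `(a,x,h)`-letters. -/
abbrev iota2 (l : L2 g) : L3 g := Sum.map id Sum.inl l

/-- Retraction of letters. -/
def rho3 : L3 g → L2 g
  | .inl i => .inl i
  | .inr (.inl i) => .inr i
  | .inr (.inr i) => .inr i

/-- The `h`-letter predicate. -/
def isH : L3 g → Bool := fun l => match l with | .inr (.inr _) => true | _ => false

abbrev notH (l : L3 g) : Bool := !isH l

def hLet (j : Fin g) : L3 g := Sum.inr (Sum.inr j)

@[simp] lemma isH_iota2 (l : L2 g) : isH (iota2 l) = false := by cases l <;> rfl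

@[simp] lemma isH_hLet (j : Fin g) : isH (hLet j) = true := rfl

@[simp] lemma rho3_iota2 (l : L2 g) : rho3 (iota2 l) = l := by cases l <;> rfl

lemma iota2_rho3 {a : L3 g} (h : isH a = false) : iota2 (rho3 a) = a := by
  rcases a with i | j | k
  · rfl
  · rfl
  · simp [isH] at h

lemma iota2_inj : Function.Injective (iota2 (g := g)) :=
  fun a b h => by simpa using congrArg rho3 h

@[simp] lemma map_rho3_iota2 (l : List (L2 g)) : (l.map iota2).map rho3 = l := by
  rw [List.map_map]; simp [Function.comp_def]

lemma noH_map (l : List (L3 g)) (h : l.countP isH = 0) : (l.map rho3).map iota2 = l := by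
  induction l with
  | nil => rfl
  | cons a t ih =>
    rw [List.countP_cons] at h
    have ha : isH a = false := by
      by_contra hc
      simp only [Bool.not_eq_false] at hc
      simp [hc] at h
    simp only [List.map_cons, iota2_rho3 ha, ih (by omega)]

lemma countP_isH_map_iota2 (l : List (L2 g)) : (l.map iota2).countP isH = 0 := by
  rw [List.countP_map]
  simp [Function.comp_def]

lemma hLet_inj : Function.Injective (hLet (g := g)) := by
  intro a b h
  simpa [hLet] using h

/-- Big border index: a direction together with an arbitrary word. -/
abbrev BigIdx (g : ℕ) := Fin g × List (L2 g)

noncomputable def bmonW (β : BigIdx g) : NC3 g :=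
  MonoidAlgebra.of ℝ (Word3 g) (FreeMonoid.ofList (hLet β.1 :: β.2.map iota2))

def encL (β : BigIdx g) (w : List (L2 g)) : List (L3 g) :=
  w.map iota2 ++ hLet β.1 :: β.2.map iota2

noncomputable def encR (β : BigIdx g) (w : Word2 g) : Word3 g :=
  FreeMonoid.ofList (encL β (FreeMonoid.toList w))

def codeL (β β' : BigIdx g) (w : List (L2 g)) : List (L3 g) :=
  (β.2.reverse.map iota2) ++ hLet β.1 :: encL β' w

noncomputable def codeW (β β' : BigIdx g) (w : Word2 g) : Word3 g :=
  FreeMonoid.ofList (codeL β β' (FreeMonoid.toList w))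

lemma take_drop_notH (u : List (L2 g)) (j : Fin g) (t : List (L3 g)) :
    (u.map iota2 ++ hLet j :: t).takeWhile notH = u.map iota2 ∧
    (u.map iota2 ++ hLet j :: t).dropWhile notH = hLet j :: t := by
  induction u with
  | nil =>
    constructor
    · simp [List.takeWhile_cons, notH]
    · simp [List.dropWhile_cons, notH]
  | cons a u ih =>
    constructor
    · simp only [List.map_cons, List.cons_append, List.takeWhile_cons, notH, isH_iota2,
        Bool.not_false, if_true]
      rw [ih.1]
    · simp only [List.map_cons, List.cons_append, List.dropWhile_cons, notH, isH_iota2,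
        Bool.not_false, if_true]
      exact ih.2

lemma encL_inj {β γ : BigIdx g} {u v : List (L2 g)} (h : encL β u = encL γ v) :
    β = γ ∧ u = v := by
  have h1 := congrArg (List.takeWhile notH) h
  have h2 := congrArg (List.dropWhile notH) h
  simp only [encL] at h1 h2
  rw [(take_drop_notH u β.1 _).1, (take_drop_notH v γ.1 _).1] at h1
  rw [(take_drop_notH u β.1 _).2, (take_drop_notH v γ.1 _).2] at h2
  have hu : u = v := List.map_injective_iff.mpr iota2_inj h1
  obtain ⟨hh, ht⟩ := List.cons.inj h2
  have hβ1 : β.1 = γ.1 := hLet_inj (by simpa [hLet] using hh)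
  have hβ2 : β.2 = γ.2 := List.map_injective_iff.mpr iota2_inj ht
  exact ⟨Prod.ext hβ1 hβ2, hu⟩

lemma codeL_inj {β β' γ γ' : BigIdx g} {u v : List (L2 g)}
    (h : codeL β β' u = codeL γ γ' v) : β = γ ∧ β' = γ' ∧ u = v := by
  have h1 := congrArg (List.takeWhile notH) h
  have h2 := congrArg (List.dropWhile notH) h
  simp only [codeL, encL] at h1 h2
  rw [(take_drop_notH β.2.reverse β.1 _).1, (take_drop_notH γ.2.reverse γ.1 _).1] at h1
  rw [(take_drop_notH β.2.reverse β.1 _).2, (take_drop_notH γ.2.reverse γ.1 _).2] at h2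
  have hβ2 : β.2 = γ.2 := by
    have := List.map_injective_iff.mpr iota2_inj h1
    simpa using congrArg List.reverse this
  obtain ⟨hh, ht⟩ := List.cons.inj h2
  have hβ1 : β.1 = γ.1 := hLet_inj (by simpa [hLet] using hh)
  obtain ⟨h3, h4⟩ := encL_inj ht
  exact ⟨Prod.ext hβ1 hβ2, h3, h4⟩

lemma encR_inj (β : BigIdx g) : Function.Injective (encR β) := by
  intro a b h
  have : encL β (FreeMonoid.toList a) = encL β (FreeMonoid.toList b) := by
    have := congrArg FreeMonoid.toList h
    simpa [encR, FreeMonoid.toList_ofList] using this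
  have := (encL_inj this).2
  exact FreeMonoid.toList.injective this

lemma codeW_inj (β β' : BigIdx g) : Function.Injective (codeW β β') := by
  intro a b h
  have : codeL β β' (FreeMonoid.toList a) = codeL β β' (FreeMonoid.toList b) := by
    have := congrArg FreeMonoid.toList h
    simpa [codeW, FreeMonoid.toList_ofList] using this
  exact FreeMonoid.toList.injective (codeL_inj this).2.2

lemma codeW_inj' {β β' γ γ' : BigIdx g} {u v : Word2 g}
    (h : codeW β β' u = codeW γ γ' v) : β = γ ∧ β' = γ' := by
  have : codeL β β' (FreeMonoid.toList u) = codeL γ γ' (FreeMonoid.toList v) := by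
    have := congrArg FreeMonoid.toList h
    simpa [codeW, FreeMonoid.toList_ofList] using this
  exact ⟨(codeL_inj this).1, (codeL_inj this).2.1⟩

end NCConvexity

namespace NCConvexity

variable {g : ℕ}

noncomputable def rev3 (w : Word3 g) : Word3 g :=
  FreeMonoid.ofList (FreeMonoid.toList w).reverse

lemma ncT3_eq_mapDomain (p : NC3 g) : ncT3 p = MonoidAlgebra.mapDomain rev3 p := rfl

@[simp] lemma ncT3_single (w : Word3 g) (c : ℝ) :
    ncT3 (MonoidAlgebra.single w c) = MonoidAlgebra.single (rev3 w) c :=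
  MonoidAlgebra.mapDomain_single

@[simp] lemma ncT3_add (p q : NC3 g) : ncT3 (p + q) = ncT3 p + ncT3 q :=
  MonoidAlgebra.mapDomain_add _ _ _

@[simp] lemma ncT3_zero : ncT3 (0 : NC3 g) = 0 := MonoidAlgebra.mapDomain_zero _

@[simp] lemma ncT3_sub (p q : NC3 g) : ncT3 (p - q) = ncT3 p - ncT3 q := by
  rw [eq_sub_iff_add_eq, ← ncT3_add, sub_add_cancel]

@[simp] lemma ncT3_smul (c : ℝ) (p : NC3 g) : ncT3 (c • p) = c • ncT3 p :=
  congrArg MonoidAlgebra.ofCoeff (Finsupp.mapDomain_smul c p.coeff)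

lemma ncT3_sum {ι : Type*} (s : Finset ι) (f : ι → NC3 g) :
    ncT3 (∑ i ∈ s, f i) = ∑ i ∈ s, ncT3 (f i) :=
  map_sum ({ toFun := ncT3, map_zero' := ncT3_zero, map_add' := ncT3_add } : NC3 g →+ NC3 g) f s

lemma rev3_mul (a b : Word3 g) : rev3 (a * b) = rev3 b * rev3 a := by
  apply FreeMonoid.toList.injective
  simp [rev3, FreeMonoid.toList_mul, FreeMonoid.toList_ofList, List.reverse_append]

lemma ncT3_mul (p q : NC3 g) : ncT3 (p * q) = ncT3 q * ncT3 p := by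
  induction p using MonoidAlgebra.induction_linear with
  | zero => simp
  | add a b ha hb => rw [add_mul, ncT3_add, ncT3_add, ha, hb, mul_add]
  | single w c =>
    induction q using MonoidAlgebra.induction_linear with
    | zero => simp
    | add a b ha hb => rw [mul_add, ncT3_add, ncT3_add, ha, hb, add_mul]
    | single v d =>
      rw [MonoidAlgebra.single_mul_single, ncT3_single, ncT3_single, ncT3_single,
        MonoidAlgebra.single_mul_single, rev3_mul, mul_comm c d]

@[simp] lemma rev3_rev3 (w : Word3 g) : rev3 (rev3 w) = w := by
  apply FreeMonoid.toList.injective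
  simp [rev3, FreeMonoid.toList_ofList]

@[simp] lemma ncT3_ncT3 (p : NC3 g) : ncT3 (ncT3 p) = p := by
  induction p using MonoidAlgebra.induction_linear with
  | zero => simp
  | add a b ha hb => rw [ncT3_add, ncT3_add, ha, hb]
  | single w c => simp

/-- Same lemmas for `ncT` on `NC2`. -/
noncomputable def rev2 (w : Word2 g) : Word2 g :=
  FreeMonoid.ofList (FreeMonoid.toList w).reverse

lemma ncT_eq_mapDomain (p : NC2 g) : ncT p = MonoidAlgebra.mapDomain rev2 p := rfl

@[simp] lemma ncT_single (w : Word2 g) (c : ℝ) :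
    ncT (MonoidAlgebra.single w c) = MonoidAlgebra.single (rev2 w) c :=
  MonoidAlgebra.mapDomain_single

@[simp] lemma ncT_add (p q : NC2 g) : ncT (p + q) = ncT p + ncT q :=
  MonoidAlgebra.mapDomain_add _ _ _

@[simp] lemma ncT_zero : ncT (0 : NC2 g) = 0 := MonoidAlgebra.mapDomain_zero _

/-- `ltr3` products over a list. -/
lemma prod_ltr3 (l : List (L3 g)) :
    (l.map ltr3).prod = MonoidAlgebra.of ℝ (Word3 g) (FreeMonoid.ofList l) := by
  induction l with
  | nil => simp [FreeMonoid.ofList_nil, MonoidAlgebra.of_apply, MonoidAlgebra.one_def]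
  | cons a t ih =>
    rw [List.map_cons, List.prod_cons, ih, FreeMonoid.ofList_cons, map_mul]
    rfl

/-- `emb23` on monomials. -/
lemma emb23_of (w : Word2 g) :
    emb23 (MonoidAlgebra.of ℝ (Word2 g) w)
      = MonoidAlgebra.of ℝ (Word3 g) (FreeMonoid.ofList ((FreeMonoid.toList w).map iota2)) := by
  rw [emb23, MonoidAlgebra.lift_of, FreeMonoid.lift_apply]
  have : (FreeMonoid.toList w).map (fun l => ltr3 (Sum.map id Sum.inl l))
      = ((FreeMonoid.toList w).map iota2).map ltr3 := by
    rw [List.map_map]; rfl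
  rw [this, prod_ltr3]

lemma single_eq_smul_of (w : Word2 g) (c : ℝ) :
    (MonoidAlgebra.single w c : NC2 g) = c • MonoidAlgebra.of ℝ (Word2 g) w := by
  rw [MonoidAlgebra.of_apply, MonoidAlgebra.smul_single', mul_one]

lemma single_eq_smul_of3 (w : Word3 g) (c : ℝ) :
    (MonoidAlgebra.single w c : NC3 g) = c • MonoidAlgebra.of ℝ (Word3 g) w := by
  rw [MonoidAlgebra.of_apply, MonoidAlgebra.smul_single', mul_one]

lemma emb23_single (w : Word2 g) (c : ℝ) :
    emb23 (MonoidAlgebra.single w c)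
      = MonoidAlgebra.single (FreeMonoid.ofList ((FreeMonoid.toList w).map iota2)) c := by
  rw [single_eq_smul_of, map_smul, emb23_of, single_eq_smul_of3]

end NCConvexity

namespace NCConvexity

variable {g : ℕ}

lemma ncT3_emb23 (p : NC2 g) : ncT3 (emb23 p) = emb23 (ncT p) := by
  induction p using MonoidAlgebra.induction_linear with
  | zero => simp
  | add a b ha hb => rw [map_add, ncT3_add, ha, hb, ncT_add, map_add]
  | single w c =>
    rw [emb23_single, ncT3_single, ncT_single, emb23_single]
    congr 1
    apply FreeMonoid.toList.injective
    simp [rev3, rev2, FreeMonoid.toList_ofList, List.map_reverse]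

lemma bmonW_eq_single (β : BigIdx g) :
    bmonW β = MonoidAlgebra.single (FreeMonoid.ofList (hLet β.1 :: β.2.map iota2)) 1 := rfl

/-- `emb23 p * bmonW β` is a relabelling of `p` along `encR β`. -/
lemma emb_mul_bmonW (β : BigIdx g) (p : NC2 g) :
    emb23 p * bmonW β = MonoidAlgebra.mapDomain (encR β) p := by
  induction p using MonoidAlgebra.induction_linear with
  | zero => simp [MonoidAlgebra.mapDomain_zero]
  | add a b ha hb => rw [map_add, add_mul, ha, hb, MonoidAlgebra.mapDomain_add]
  | single w c =>
    rw [emb23_single, bmonW_eq_single, MonoidAlgebra.single_mul_single, mul_one,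
      MonoidAlgebra.mapDomain_single]
    congr 1

/-- The sandwich `V_β^T (emb23 p) V_{β'}` is a relabelling of `p` along `codeW β β'`. -/
lemma sandwich (β β' : BigIdx g) (p : NC2 g) :
    ncT3 (bmonW β) * (emb23 p * bmonW β') = MonoidAlgebra.mapDomain (codeW β β') p := by
  induction p using MonoidAlgebra.induction_linear with
  | zero => simp [MonoidAlgebra.mapDomain_zero]
  | add a b ha hb => rw [map_add, add_mul, mul_add, ha, hb, MonoidAlgebra.mapDomain_add]
  | single w c =>
    rw [emb23_single, bmonW_eq_single, bmonW_eq_single, MonoidAlgebra.single_mul_single,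
      ncT3_single, MonoidAlgebra.single_mul_single, mul_one, one_mul,
      MonoidAlgebra.mapDomain_single]
    congr 1
    apply FreeMonoid.toList.injective
    simp only [codeW, codeL, encL, rev3, FreeMonoid.toList_mul, FreeMonoid.toList_ofList,
      List.reverse_cons, List.map_reverse]
    simp [List.append_assoc]

/-- Extraction of the `β`-component of an `h`-linear polynomial. -/
noncomputable def XT (β : BigIdx g) (f : NC3 g) : NC2 g :=
  MonoidAlgebra.comapDomain (encR β) (encR_inj β) f

/-- Decoding the big index from a word with one `h`. -/
def decB (d0 : Fin g) (v : Word3 g) : BigIdx g :=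
  match (FreeMonoid.toList v).dropWhile notH with
  | (Sum.inr (Sum.inr k)) :: t => (k, t.map rho3)
  | _ => (d0, [])

lemma decB_encR (d0 : Fin g) (β : BigIdx g) (w : Word2 g) :
    decB d0 (encR β w) = β := by
  unfold decB encR
  rw [FreeMonoid.toList_ofList]
  unfold encL
  rw [(take_drop_notH (FreeMonoid.toList w) β.1 _).2]
  show (β.1, (β.2.map iota2).map rho3) = β
  rw [map_rho3_iota2]

lemma split_one (l : List (L3 g)) (h : l.countP isH = 1) :
    ∃ (u : List (L2 g)) (j : Fin g) (m : List (L2 g)), l = u.map iota2 ++ hLet j :: m.map iota2 := by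
  induction l with
  | nil => simp at h
  | cons a t ih =>
    rw [List.countP_cons] at h
    by_cases ha : isH a = true
    · rcases a with i | i | j
      · simp [isH] at ha
      · simp [isH] at ha
      · have ht : t.countP isH = 0 := by simpa [isH] using h
        exact ⟨[], j, t.map rho3, by rw [noH_map t ht]; rfl⟩
    · have ha' : isH a = false := by simpa using ha
      have ht : t.countP isH = 1 := by simp [ha'] at h; omega
      obtain ⟨u, j, m, rfl⟩ := ih ht
      exact ⟨rho3 a :: u, j, m, by simp [iota2_rho3 ha']⟩

lemma exists_encR {v : Word3 g} (h : hCount3 v = 1) :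
    ∃ β w, v = encR β w := by
  obtain ⟨u, j, m, hl⟩ := split_one (FreeMonoid.toList v) h
  refine ⟨(j, m), FreeMonoid.ofList u, ?_⟩
  apply FreeMonoid.toList.injective
  rw [hl]
  simp [encR, encL, FreeMonoid.toList_ofList]

/-- The support of `XT β f` pulled back: value lemma. -/
lemma XT_apply (β : BigIdx g) (f : NC3 g) (w : Word2 g) :
    (XT β f).coeff w = f.coeff (encR β w) := rfl

/-- Decomposition of an `h`-linear polynomial along big border indices. -/
lemma hlin_decomp (d0 : Fin g) (f : NC3 g) (hf : hHomog3 f 1)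
    (T : Finset (BigIdx g)) (hT : (f.coeff.support.image (decB d0)) ⊆ T) :
    f = ∑ β ∈ T, emb23 (XT β f) * bmonW β := by
  classical
  ext v
  rw [MonoidAlgebra.coeff_sum, Finsupp.finset_sum_apply]
  have hterm : ∀ β : BigIdx g, (emb23 (XT β f) * bmonW β).coeff v
      = if (∃ w, encR β w = v) then f.coeff v else 0 := by
    intro β
    rw [emb_mul_bmonW, MonoidAlgebra.coeff_mapDomain]
    by_cases hv : ∃ w, encR β w = v
    · obtain ⟨w, rfl⟩ := hv
      rw [Finsupp.mapDomain_apply (encR_inj β), if_pos ⟨w, rfl⟩]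
      rfl
    · rw [if_neg hv, Finsupp.mapDomain_notin_range]
      rintro ⟨w, hw⟩
      exact hv ⟨w, hw⟩
  by_cases hfv : f.coeff v = 0
  · rw [hfv]
    symm
    apply Finset.sum_eq_zero
    intro β _
    rw [hterm β]
    split <;> simp [hfv]
  · have hvs : v ∈ f.coeff.support := Finsupp.mem_support_iff.mpr hfv
    have h1 : hCount3 v = 1 := hf v hvs
    obtain ⟨β0, w0, rfl⟩ := exists_encR h1
    have hd : decB d0 (encR β0 w0) = β0 := decB_encR d0 β0 w0
    have hβ0T : β0 ∈ T := hT (Finset.mem_image.mpr ⟨_, hvs, hd⟩)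
    symm
    rw [Finset.sum_eq_single β0]
    · rw [hterm β0, if_pos ⟨w0, rfl⟩]
    · intro β _ hne
      rw [hterm β, if_neg]
      rintro ⟨w, hw⟩
      apply hne
      have h2 := decB_encR d0 β w
      rw [hw, hd] at h2
      exact h2.symm
    · intro hn; exact absurd hβ0T hn

end NCConvexity

namespace NCConvexity

variable {g : ℕ}

lemma extraction {T : Finset (BigIdx g)} (P P' : BigIdx g → BigIdx g → NC2 g)
    (h : ∑ β ∈ T, ∑ β' ∈ T, MonoidAlgebra.mapDomain (codeW β β') (P β β')
       = ∑ β ∈ T, ∑ β' ∈ T, MonoidAlgebra.mapDomain (codeW β β') (P' β β'))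
    {β β' : BigIdx g} (hβ : β ∈ T) (hβ' : β' ∈ T) : P β β' = P' β β' := by
  classical
  ext w
  have key : ∀ Q : BigIdx g → BigIdx g → NC2 g,
      (∑ γ ∈ T, ∑ γ' ∈ T, MonoidAlgebra.mapDomain (codeW γ γ') (Q γ γ')).coeff (codeW β β' w)
        = (Q β β').coeff w := by
    intro Q
    rw [MonoidAlgebra.coeff_sum, Finsupp.finset_sum_apply]
    rw [Finset.sum_eq_single β]
    · rw [MonoidAlgebra.coeff_sum, Finsupp.finset_sum_apply, Finset.sum_eq_single β']
      · rw [MonoidAlgebra.coeff_mapDomain]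
        exact Finsupp.mapDomain_apply (codeW_inj β β') _ _
      · intro γ' _ hne
        rw [MonoidAlgebra.coeff_mapDomain]
        apply Finsupp.mapDomain_notin_range
        rintro ⟨u, hu⟩
        exact hne (codeW_inj' hu).2
      · intro hn; exact absurd hβ' hn
    · intro γ _ hne
      rw [MonoidAlgebra.coeff_sum, Finsupp.finset_sum_apply]
      apply Finset.sum_eq_zero
      intro γ' _
      rw [MonoidAlgebra.coeff_mapDomain]
      apply Finsupp.mapDomain_notin_range
      rintro ⟨u, hu⟩
      exact hne (codeW_inj' hu).1
    · intro hn; exact absurd hβ hn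
  have h2 := congrArg (fun z : NC3 g => z.coeff (codeW β β' w)) h
  rw [key P, key P'] at h2
  exact h2

variable {ℓ d : ℕ}

/-- The inclusion of border indices into big indices. -/
def tB (α : BIdx g ℓ d) : BigIdx g := (α.1, α.2.1)

lemma tB_inj : Function.Injective (tB (g := g) (ℓ := ℓ) (d := d)) := by
  rintro ⟨j, m⟩ ⟨k, m'⟩ h
  obtain ⟨h1, h2⟩ := Prod.mk.injEq .. ▸ h
  exact Prod.ext h1 (Subtype.ext h2)

lemma borderVec_eq_bmonW (α : BIdx g ℓ d) : borderVec g ℓ d α = bmonW (tB α) := rfl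

lemma sandwich' (β β' : BigIdx g) (u u' : NC2 g) :
    ncT3 (emb23 u * bmonW β) * (emb23 u' * bmonW β')
      = MonoidAlgebra.mapDomain (codeW β β') (ncT u * u') := by
  rw [ncT3_mul, ncT3_emb23, mul_assoc, ← mul_assoc (emb23 (ncT u)), ← map_mul, ← mul_assoc,
    ← sandwich, mul_assoc]

lemma mapDomain_sub'' {α β : Type*} (h : α → β) (a b : MonoidAlgebra ℝ α) :
    MonoidAlgebra.mapDomain h (a - b) = MonoidAlgebra.mapDomain h a - MonoidAlgebra.mapDomain h b :=
  map_sub (AddMonoidHom.mk' (MonoidAlgebra.mapDomain (R := ℝ) h) (MonoidAlgebra.mapDomain_add h)) a b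

lemma mapDomain_sum'' {α β ι : Type*} (h : α → β) (s : Finset ι) (F : ι → MonoidAlgebra ℝ α) :
    MonoidAlgebra.mapDomain h (∑ i ∈ s, F i) = ∑ i ∈ s, MonoidAlgebra.mapDomain h (F i) :=
  map_sum (AddMonoidHom.mk' (MonoidAlgebra.mapDomain (R := ℝ) h) (MonoidAlgebra.mapDomain_add h)) F s

/-- The big middle matrix coming from an SDS decomposition agrees with any
middle matrix representation. -/
lemma middle_matrix_unique (d0 : Fin g) (q : NC3 g)
    (Z : Matrix (BIdx g ℓ d) (BIdx g ℓ d) (NC2 g))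
    (hZ : q = ∑ α, ∑ β, ncT3 (borderVec g ℓ d α) * emb23 (Z α β) * borderVec g ℓ d β)
    {σ τ : ℕ} (f : Fin σ → NC3 g) (r : Fin τ → NC3 g)
    (hf : ∀ j, hHomog3 (f j) 1) (hr : ∀ l, hHomog3 (r l) 1)
    (hsds : q = (∑ j, ncT3 (f j) * f j) - ∑ l, ncT3 (r l) * r l) :
    ∀ α β : BIdx g ℓ d,
      Z α β = (∑ j, ncT (XT (tB α) (f j)) * XT (tB β) (f j))
            - ∑ l, ncT (XT (tB α) (r l)) * XT (tB β) (r l) := by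
  classical
  set T : Finset (BigIdx g) :=
    ((Finset.univ : Finset (BIdx g ℓ d)).image tB)
    ∪ (Finset.univ : Finset (Fin σ)).biUnion (fun j => (f j).coeff.support.image (decB d0))
    ∪ (Finset.univ : Finset (Fin τ)).biUnion (fun l => (r l).coeff.support.image (decB d0))
    with hTdef
  have hTf : ∀ j, ((f j).coeff.support.image (decB d0)) ⊆ T := by
    intro j
    rw [hTdef]
    intro x hx
    exact Finset.mem_union_left _ (Finset.mem_union_right _
      (Finset.mem_biUnion.mpr ⟨j, Finset.mem_univ _, hx⟩))
  have hTr : ∀ l, ((r l).coeff.support.image (decB d0)) ⊆ T := by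
    intro l
    rw [hTdef]
    intro x hx
    exact Finset.mem_union_right _ (Finset.mem_biUnion.mpr ⟨l, Finset.mem_univ _, hx⟩)
  have hTB : ∀ α : BIdx g ℓ d, tB α ∈ T := by
    intro α
    rw [hTdef]
    exact Finset.mem_union_left _ (Finset.mem_union_left _
      (Finset.mem_image.mpr ⟨α, Finset.mem_univ _, rfl⟩))
  have himg : ((Finset.univ : Finset (BIdx g ℓ d)).image tB) ⊆ T := by
    intro x hx
    obtain ⟨a, _, rfl⟩ := Finset.mem_image.mp hx
    exact hTB a
  -- the extended matrix
  set Zb : BigIdx g → BigIdx g → NC2 g := fun β β' =>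
    if h : (∃ a : BIdx g ℓ d, tB a = β) ∧ (∃ b : BIdx g ℓ d, tB b = β')
    then Z h.1.choose h.2.choose else 0 with hZbdef
  have hZb_tB : ∀ a b : BIdx g ℓ d, Zb (tB a) (tB b) = Z a b := by
    intro a b
    have hex : (∃ a' : BIdx g ℓ d, tB a' = tB a) ∧ (∃ b' : BIdx g ℓ d, tB b' = tB b) :=
      ⟨⟨a, rfl⟩, ⟨b, rfl⟩⟩
    have hgoal : Zb (tB a) (tB b)
        = if h : (∃ a' : BIdx g ℓ d, tB a' = tB a) ∧ (∃ b' : BIdx g ℓ d, tB b' = tB b)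
          then Z h.1.choose h.2.choose else 0 := rfl
    rw [hgoal, dif_pos hex]
    congr 1
    · exact tB_inj hex.1.choose_spec
    · exact tB_inj hex.2.choose_spec
  have hZb_zero : ∀ β β', (¬ ∃ a : BIdx g ℓ d, tB a = β) → Zb β β' = 0 := by
    intro β β' hn
    have hgoal : Zb β β'
        = if h : (∃ a : BIdx g ℓ d, tB a = β) ∧ (∃ b : BIdx g ℓ d, tB b = β')
          then Z h.1.choose h.2.choose else 0 := rfl
    rw [hgoal]
    exact dif_neg (fun h => hn h.1)
  have hZb_zero' : ∀ β β', (¬ ∃ b : BIdx g ℓ d, tB b = β') → Zb β β' = 0 := by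
    intro β β' hn
    have hgoal : Zb β β'
        = if h : (∃ a : BIdx g ℓ d, tB a = β) ∧ (∃ b : BIdx g ℓ d, tB b = β')
          then Z h.1.choose h.2.choose else 0 := rfl
    rw [hgoal]
    exact dif_neg (fun h => hn h.2)
  -- hZ side as a T-indexed double sum
  have hZT : q = ∑ β ∈ T, ∑ β' ∈ T, MonoidAlgebra.mapDomain (codeW β β') (Zb β β') := by
    have stepA : ∑ β ∈ ((Finset.univ : Finset (BIdx g ℓ d)).image tB),
        ∑ β' ∈ ((Finset.univ : Finset (BIdx g ℓ d)).image tB),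
          MonoidAlgebra.mapDomain (codeW β β') (Zb β β')
        = ∑ a : BIdx g ℓ d, ∑ b : BIdx g ℓ d,
            MonoidAlgebra.mapDomain (codeW (tB a) (tB b)) (Z a b) := by
      rw [Finset.sum_image (fun a _ b _ h => tB_inj h)]
      apply Finset.sum_congr rfl
      intro a _
      rw [Finset.sum_image (fun a _ b _ h => tB_inj h)]
      apply Finset.sum_congr rfl
      intro b _
      rw [hZb_tB]
    have stepB : ∑ β ∈ T, ∑ β' ∈ T, MonoidAlgebra.mapDomain (codeW β β') (Zb β β')
        = ∑ β ∈ ((Finset.univ : Finset (BIdx g ℓ d)).image tB),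
            ∑ β' ∈ ((Finset.univ : Finset (BIdx g ℓ d)).image tB),
              MonoidAlgebra.mapDomain (codeW β β') (Zb β β') := by
      rw [← Finset.sum_subset himg]
      · apply Finset.sum_congr rfl
        intro β _
        rw [← Finset.sum_subset himg]
        intro β' _ hβ'
        rw [hZb_zero' β β' (fun ⟨b, hb⟩ =>
          hβ' (Finset.mem_image.mpr ⟨b, Finset.mem_univ _, hb⟩)), MonoidAlgebra.mapDomain_zero _]
      · intro β _ hβ
        apply Finset.sum_eq_zero
        intro β' _
        rw [hZb_zero β β' (fun ⟨a, ha⟩ =>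
          hβ (Finset.mem_image.mpr ⟨a, Finset.mem_univ _, ha⟩)), MonoidAlgebra.mapDomain_zero _]
    rw [stepB, stepA, hZ]
    apply Finset.sum_congr rfl
    intro a _
    apply Finset.sum_congr rfl
    intro b _
    rw [mul_assoc, borderVec_eq_bmonW, borderVec_eq_bmonW, sandwich]
  -- SDS side as a T-indexed double sum
  set G : BigIdx g → BigIdx g → NC2 g := fun β β' =>
    (∑ j, ncT (XT β (f j)) * XT β' (f j)) - ∑ l, ncT (XT β (r l)) * XT β' (r l) with hGdef
  have hGT : q = ∑ β ∈ T, ∑ β' ∈ T, MonoidAlgebra.mapDomain (codeW β β') (G β β') := by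
    have hfd : ∀ j : Fin σ, ncT3 (f j) * f j
        = ∑ β ∈ T, ∑ β' ∈ T,
            MonoidAlgebra.mapDomain (codeW β β') (ncT (XT β (f j)) * XT β' (f j)) := by
      intro j
      conv_lhs => rw [hlin_decomp d0 (f j) (hf j) T (hTf j)]
      rw [ncT3_sum, Finset.sum_mul_sum]
      apply Finset.sum_congr rfl
      intro β _
      apply Finset.sum_congr rfl
      intro β' _
      exact sandwich' β β' _ _
    have hrd : ∀ l : Fin τ, ncT3 (r l) * r l
        = ∑ β ∈ T, ∑ β' ∈ T,
            MonoidAlgebra.mapDomain (codeW β β') (ncT (XT β (r l)) * XT β' (r l)) := by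
      intro l
      conv_lhs => rw [hlin_decomp d0 (r l) (hr l) T (hTr l)]
      rw [ncT3_sum, Finset.sum_mul_sum]
      apply Finset.sum_congr rfl
      intro β _
      apply Finset.sum_congr rfl
      intro β' _
      exact sandwich' β β' _ _
    rw [hsds, Finset.sum_congr rfl (fun j _ => hfd j), Finset.sum_congr rfl (fun l _ => hrd l),
      Finset.sum_comm, Finset.sum_comm (s := Finset.univ) (t := T)]
    rw [← Finset.sum_sub_distrib]
    apply Finset.sum_congr rfl
    intro β _
    rw [Finset.sum_comm, Finset.sum_comm (s := Finset.univ) (t := T), ← Finset.sum_sub_distrib]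
    apply Finset.sum_congr rfl
    intro β' _
    have hgoal : G β β'
        = (∑ j, ncT (XT β (f j)) * XT β' (f j)) - ∑ l, ncT (XT β (r l)) * XT β' (r l) := rfl
    rw [hgoal, mapDomain_sub'', mapDomain_sum'', mapDomain_sum'']
  -- extraction
  intro α β
  have hext := extraction Zb G (by rw [← hZT, ← hGT]) (hTB α) (hTB β)
  rw [hZb_tB] at hext
  exact hext

end NCConvexity

namespace NCConvexity

variable {g : ℕ}

/-- Evaluation bundled as an algebra homomorphism. -/
noncomputable def evalHom {m : Type} [Fintype m] [DecidableEq m]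
    (A X : Fin g → Matrix m m ℝ) : NC2 g →ₐ[ℝ] Matrix m m ℝ :=
  MonoidAlgebra.lift ℝ _ (Word2 g) (FreeMonoid.lift (Sum.elim A X))

lemma eval_eq_evalHom {m : Type} [Fintype m] [DecidableEq m]
    (p : NC2 g) (A X : Fin g → Matrix m m ℝ) : eval p A X = evalHom A X p := by
  rw [evalHom, MonoidAlgebra.lift_apply, eval]
  apply Finsupp.sum_congr
  intro w _
  rw [FreeMonoid.lift_apply]
  rfl

lemma eval_mul {m : Type} [Fintype m] [DecidableEq m]
    (p q : NC2 g) (A X : Fin g → Matrix m m ℝ) :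
    eval (p * q) A X = eval p A X * eval q A X := by
  rw [eval_eq_evalHom, eval_eq_evalHom, eval_eq_evalHom, map_mul]

lemma eval_sub {m : Type} [Fintype m] [DecidableEq m]
    (p q : NC2 g) (A X : Fin g → Matrix m m ℝ) :
    eval (p - q) A X = eval p A X - eval q A X := by
  rw [eval_eq_evalHom, eval_eq_evalHom, eval_eq_evalHom, map_sub]

lemma eval_sum {m ι : Type} [Fintype m] [DecidableEq m] (s : Finset ι)
    (F : ι → NC2 g) (A X : Fin g → Matrix m m ℝ) :
    eval (∑ i ∈ s, F i) A X = ∑ i ∈ s, eval (F i) A X := by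
  rw [eval_eq_evalHom, map_sum]
  exact Finset.sum_congr rfl (fun i _ => (eval_eq_evalHom _ _ _).symm)

lemma eval_add {m : Type} [Fintype m] [DecidableEq m]
    (p q : NC2 g) (A X : Fin g → Matrix m m ℝ) :
    eval (p + q) A X = eval p A X + eval q A X := by
  rw [eval_eq_evalHom, eval_eq_evalHom, eval_eq_evalHom, map_add]

lemma eval_single {m : Type} [Fintype m] [DecidableEq m]
    (w : Word2 g) (c : ℝ) (A X : Fin g → Matrix m m ℝ) :
    eval (MonoidAlgebra.single w c) A X = c • wordEval w A X := by
  rw [eval]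
  exact Finsupp.sum_single_index (by rw [zero_smul])

lemma wordEval_rev {m : Type} [Fintype m] [DecidableEq m]
    (w : Word2 g) (A X : Fin g → Matrix m m ℝ)
    (hA : IsSymTuple A) (hX : IsSymTuple X) :
    wordEval (rev2 w) A X = (wordEval w A X)ᵀ := by
  unfold wordEval listEval
  rw [Matrix.transpose_list_prod, rev2, FreeMonoid.toList_ofList]
  congr 1
  rw [List.map_map, ← List.map_reverse]
  apply List.map_congr_left
  intro a _
  rcases a with i | i
  · exact (hA i).symm
  · exact (hX i).symm

lemma eval_ncT {m : Type} [Fintype m] [DecidableEq m]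
    (p : NC2 g) (A X : Fin g → Matrix m m ℝ)
    (hA : IsSymTuple A) (hX : IsSymTuple X) :
    eval (ncT p) A X = (eval p A X)ᵀ := by
  induction p using MonoidAlgebra.induction_linear with
  | zero => simp [ncT_zero, eval_eq_evalHom]
  | add a b ha hb => rw [ncT_add, eval_add, eval_add, ha, hb, Matrix.transpose_add]
  | single w c =>
    rw [ncT_single, eval_single, eval_single, wordEval_rev w A X hA hX,
      Matrix.transpose_smul]

end NCConvexity

namespace NCConvexity

variable {g : ℕ}

lemma hCount3_eq (v : Word3 g) : hCount3 v = (FreeMonoid.toList v).countP isH := rfl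

lemma hCount3_encR (β : BigIdx g) (w : Word2 g) : hCount3 (encR β w) = 1 := by
  rw [hCount3_eq, encR, FreeMonoid.toList_ofList, encL, List.countP_append, List.countP_cons]
  rw [countP_isH_map_iota2, countP_isH_map_iota2]
  simp [isH_hLet]

lemma hHomog3_emb_mul_bmonW (u : NC2 g) (β : BigIdx g) : hHomog3 (emb23 u * bmonW β) 1 := by
  classical
  intro v hv
  rw [emb_mul_bmonW] at hv
  obtain ⟨w, _, rfl⟩ := Finset.mem_image.mp (Finsupp.mapDomain_support hv)
  exact hCount3_encR β w

lemma hHomog3_bmonW (β : BigIdx g) : hHomog3 (bmonW β) 1 := by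
  have : bmonW β = emb23 (1 : NC2 g) * bmonW β := by rw [map_one, one_mul]
  rw [this]
  exact hHomog3_emb_mul_bmonW 1 β

lemma hHomog3_add {p q : NC3 g} {k : ℕ} (hp : hHomog3 p k) (hq : hHomog3 q k) :
    hHomog3 (p + q) k := by
  classical
  intro v hv
  rcases Finset.mem_union.mp (Finsupp.support_add (g₁ := p.coeff) (g₂ := q.coeff) hv) with h | h
  · exact hp v h
  · exact hq v h

lemma hHomog3_smul {p : NC3 g} {k : ℕ} (c : ℝ) (hp : hHomog3 p k) : hHomog3 (c • p) k := by
  classical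
  intro v hv
  exact hp v (Finsupp.support_smul (b := c) (g := p.coeff) hv)

lemma hHomog3_sum {ι : Type*} {k : ℕ} (s : Finset ι) (F : ι → NC3 g)
    (h : ∀ i ∈ s, hHomog3 (F i) k) : hHomog3 (∑ i ∈ s, F i) k := by
  classical
  induction s using Finset.induction_on with
  | empty => intro v hv; simp at hv
  | insert a s hnotmem ih =>
    rw [Finset.sum_insert hnotmem]
    exact hHomog3_add (h _ (Finset.mem_insert_self _ _))
      (ih (fun i hi => h i (Finset.mem_insert_of_mem hi)))

lemma exists_sds {ℓ d : ℕ} (q : NC3 g) (hq : IsSymPoly3 q)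
    (Z : Matrix (BIdx g ℓ d) (BIdx g ℓ d) (NC2 g))
    (hZ : q = ∑ α, ∑ β, ncT3 (borderVec g ℓ d α) * emb23 (Z α β) * borderVec g ℓ d β) :
    IsSDS q (Fintype.card (BIdx g ℓ d))
      (Fintype.card (BIdx g ℓ d) + Fintype.card (BIdx g ℓ d)) := by
  classical
  set N := Fintype.card (BIdx g ℓ d) with hN
  set e : Fin N ≃ BIdx g ℓ d := (Fintype.equivFin (BIdx g ℓ d)).symm with he
  set p : BIdx g ℓ d → NC3 g := fun α => borderVec g ℓ d α with hp
  set rr : BIdx g ℓ d → NC3 g := fun α => ∑ β, emb23 (Z α β) * borderVec g ℓ d β with hrr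
  set c : ℝ := (Real.sqrt 2)⁻¹ with hc
  have hpc : ∀ α, hHomog3 (p α) 1 := fun α => hHomog3_bmonW (tB α)
  have hrc : ∀ α, hHomog3 (rr α) 1 := by
    intro α
    apply hHomog3_sum
    intro β _
    rw [borderVec_eq_bmonW]
    exact hHomog3_emb_mul_bmonW _ _
  have hq1 : ∑ α, ncT3 (p α) * rr α = q := by
    rw [hZ]
    apply Finset.sum_congr rfl
    intro α _
    rw [hrr]
    simp only []
    rw [Finset.mul_sum]
    apply Finset.sum_congr rfl
    intro β _
    rw [mul_assoc]
  have hq2 : ∑ α, ncT3 (rr α) * p α = q := by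
    have h1 : ncT3 (∑ α, ncT3 (p α) * rr α) = ∑ α, ncT3 (rr α) * p α := by
      rw [ncT3_sum]
      apply Finset.sum_congr rfl
      intro α _
      rw [ncT3_mul, ncT3_ncT3]
    rw [hq1] at h1
    rw [← h1]
    exact hq
  have hcc : c * c = 2⁻¹ := by
    rw [hc, ← mul_inv]
    norm_num [Real.mul_self_sqrt]
  refine ⟨fun i => c • (p (e i) + rr (e i)),
      fun i => Sum.elim (fun a : Fin N => c • p (e a)) (fun b : Fin N => c • rr (e b))
        (finSumFinEquiv.symm i), ?_, ?_, ?_⟩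
  · intro j
    exact hHomog3_smul c (hHomog3_add (hpc _) (hrc _))
  · intro l
    beta_reduce
    rcases finSumFinEquiv.symm l with a | b
    · exact hHomog3_smul c (hpc _)
    · exact hHomog3_smul c (hrc _)
  · -- the SDS identity
    set F : Fin (N + N) → NC3 g := fun l =>
      ncT3 (Sum.elim (fun a : Fin N => c • p (e a)) (fun b : Fin N => c • rr (e b))
          (finSumFinEquiv.symm l))
        * (Sum.elim (fun a : Fin N => c • p (e a)) (fun b : Fin N => c • rr (e b))
          (finSumFinEquiv.symm l)) with hF
    have hS2 : ∑ l : Fin (N + N), F l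
        = (∑ a : Fin N, ncT3 (c • p (e a)) * (c • p (e a)))
          + ∑ b : Fin N, ncT3 (c • rr (e b)) * (c • rr (e b)) := by
      have h1 : ∀ s : Fin N ⊕ Fin N, F (finSumFinEquiv s)
          = Sum.elim (fun a : Fin N => ncT3 (c • p (e a)) * (c • p (e a)))
              (fun b : Fin N => ncT3 (c • rr (e b)) * (c • rr (e b))) s := by
        intro s
        rcases s with a | b <;> rw [hF] <;> simp only [Equiv.symm_apply_apply, Sum.elim_inl,
          Sum.elim_inr]
      calc ∑ l : Fin (N + N), F l = ∑ s : Fin N ⊕ Fin N, F (finSumFinEquiv s) :=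
            (Equiv.sum_comp finSumFinEquiv F).symm
        _ = ∑ s : Fin N ⊕ Fin N,
              Sum.elim (fun a : Fin N => ncT3 (c • p (e a)) * (c • p (e a)))
                (fun b : Fin N => ncT3 (c • rr (e b)) * (c • rr (e b))) s :=
            Finset.sum_congr rfl (fun s _ => h1 s)
        _ = _ := Fintype.sum_sum_type _
    show _ = (∑ j : Fin N, ncT3 (c • (p (e j) + rr (e j))) * (c • (p (e j) + rr (e j))))
      - ∑ l : Fin (N + N), F l
    rw [hS2]
    have hre : ∀ G : BIdx g ℓ d → NC3 g, ∑ i : Fin N, G (e i) = ∑ α, G α :=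
      fun G => Equiv.sum_comp e G
    rw [hre (fun α => ncT3 (c • (p α + rr α)) * (c • (p α + rr α))),
        hre (fun α => ncT3 (c • p α) * (c • p α)),
        hre (fun α => ncT3 (c • rr α) * (c • rr α))]
    rw [← Finset.sum_add_distrib, ← Finset.sum_sub_distrib]
    have hterm : ∀ α, ncT3 (c • (p α + rr α)) * (c • (p α + rr α))
        - (ncT3 (c • p α) * (c • p α) + ncT3 (c • rr α) * (c • rr α))
        = (c * c) • (ncT3 (p α) * rr α + ncT3 (rr α) * p α) := by
      intro α
      have e1 : ncT3 (c • (p α + rr α)) * (c • (p α + rr α))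
          = (c * c) • (ncT3 (p α + rr α) * (p α + rr α)) := by
        rw [ncT3_smul, smul_mul_smul_comm]
      have e2 : ncT3 (c • p α) * (c • p α) = (c * c) • (ncT3 (p α) * p α) := by
        rw [ncT3_smul, smul_mul_smul_comm]
      have e3 : ncT3 (c • rr α) * (c • rr α) = (c * c) • (ncT3 (rr α) * rr α) := by
        rw [ncT3_smul, smul_mul_smul_comm]
      rw [e1, e2, e3, ← smul_add, ← smul_sub]
      congr 1
      rw [ncT3_add]
      noncomm_ring
    rw [Finset.sum_congr rfl (fun α _ => hterm α), ← Finset.smul_sum,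
      Finset.sum_add_distrib, hq1, hq2, hcc]
    rw [← two_smul ℝ q, smul_smul]
    norm_num

end NCConvexity

section SpectralBounds
open Matrix

lemma dotP_sum_left {m ι : Type} [Fintype m] [Fintype ι] (f : ι → m → ℝ) (w : m → ℝ) :
    (∑ i, f i) ⬝ᵥ w = ∑ i, (f i) ⬝ᵥ w := by
  simp only [dotProduct, Finset.sum_apply, Finset.sum_mul]
  exact Finset.sum_comm

lemma dotP_sum_right {m ι : Type} [Fintype m] [Fintype ι] (f : ι → m → ℝ) (w : m → ℝ) :
    w ⬝ᵥ (∑ i, f i) = ∑ i, w ⬝ᵥ (f i) := by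
  simp only [dotProduct, Finset.sum_apply, Finset.mul_sum]
  exact Finset.sum_comm

lemma mulVec_sum' {m n ι : Type} [Fintype m] [Fintype n] [Fintype ι]
    (A : Matrix n m ℝ) (f : ι → m → ℝ) :
    A *ᵥ (∑ i, f i) = ∑ i, A *ᵥ (f i) := by
  ext j
  simp only [mulVec, dotProduct, Finset.sum_apply, Finset.mul_sum]
  exact Finset.sum_comm

lemma eig_count_le_of_factor {m ι : Type} [Fintype m] [DecidableEq m] [Fintype ι]
    (S : Matrix m m ℝ) (hS : S.IsHermitian) (A : Matrix ι m ℝ)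
    (hpos : ∀ v : m → ℝ, A *ᵥ v = 0 → 0 ≤ v ⬝ᵥ (S *ᵥ v)) :
    (Finset.univ.filter (fun i => hS.eigenvalues i < 0)).card ≤ Fintype.card ι := by
  by_contra hlt
  push_neg at hlt
  set P := Finset.univ.filter (fun i => hS.eigenvalues i < 0) with hP
  have hnli : ¬ LinearIndependent ℝ (fun i : ↥P => A *ᵥ (⇑(hS.eigenvectorBasis i) : m → ℝ)) := by
    intro hli
    have := hli.fintype_card_le_finrank
    rw [Module.finrank_pi ℝ] at this
    simp only [Fintype.card_coe] at this
    omega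
  rw [Fintype.not_linearIndependent_iff] at hnli
  obtain ⟨c, hc0, i0, hci0⟩ := hnli
  set v : m → ℝ := ∑ i : ↥P, c i • (⇑(hS.eigenvectorBasis i) : m → ℝ) with hv
  have hAv : A *ᵥ v = 0 := by
    rw [hv, mulVec_sum']
    simp only [mulVec_smul]
    exact hc0
  have hSv : S *ᵥ v = ∑ i : ↥P, (c i * hS.eigenvalues i) • (⇑(hS.eigenvectorBasis i) : m → ℝ) := by
    rw [hv, mulVec_sum']
    congr 1; funext i
    rw [mulVec_smul, hS.mulVec_eigenvectorBasis, smul_smul]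
  have horth : ∀ i j : m, (⇑(hS.eigenvectorBasis i) : m → ℝ) ⬝ᵥ (⇑(hS.eigenvectorBasis j) : m → ℝ)
      = if i = j then 1 else 0 := by
    intro i j
    have horth0 := hS.eigenvectorBasis.orthonormal
    rw [orthonormal_iff_ite] at horth0
    have h2 := horth0 i j
    rw [EuclideanSpace.inner_eq_star_dotProduct] at h2
    simpa [dotProduct, mul_comm] using h2
  have hquad : v ⬝ᵥ (S *ᵥ v) = ∑ i : ↥P, hS.eigenvalues i * (c i)^2 := by
    rw [hSv, hv, dotP_sum_left]
    congr 1; funext i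
    rw [dotP_sum_right]
    rw [Finset.sum_eq_single i]
    · rw [smul_dotProduct, dotProduct_smul, horth, if_pos rfl]
      simp only [smul_eq_mul, mul_one]
      ring
    · intro j _ hji
      rw [smul_dotProduct, dotProduct_smul, horth]
      have : (i : m) ≠ (j : m) := fun h => hji.symm (Subtype.ext h)
      rw [if_neg this, smul_eq_mul, smul_eq_mul, mul_zero, mul_zero]
    · intro h; exact absurd (Finset.mem_univ i) h
  have hneg : v ⬝ᵥ (S *ᵥ v) < 0 := by
    rw [hquad]
    have : ∀ i : ↥P, hS.eigenvalues (i : m) * (c i)^2 ≤ 0 := by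
      intro i
      have hi : hS.eigenvalues (i : m) < 0 := by
        exact (Finset.mem_filter.mp i.2).2
      nlinarith [sq_nonneg (c i)]
    have hstrict : hS.eigenvalues (i0 : m) * (c i0)^2 < 0 := by
      have hi : hS.eigenvalues (i0 : m) < 0 := by
        exact (Finset.mem_filter.mp i0.2).2
      have : 0 < (c i0)^2 := by positivity
      nlinarith
    calc ∑ i : ↥P, hS.eigenvalues (i : m) * (c i)^2 
        < ∑ _i : ↥P, 0 := Finset.sum_lt_sum (fun i _ => this i) ⟨i0, Finset.mem_univ _, hstrict⟩
      _ = 0 := by simp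
  exact absurd (hpos v hAv) (not_le.mpr hneg)

lemma eig_count_le_of_factor' {m ι : Type} [Fintype m] [DecidableEq m] [Fintype ι]
    (S : Matrix m m ℝ) (hS : S.IsHermitian) (A : Matrix ι m ℝ)
    (hpos : ∀ v : m → ℝ, A *ᵥ v = 0 → v ⬝ᵥ (S *ᵥ v) ≤ 0) :
    (Finset.univ.filter (fun i => 0 < hS.eigenvalues i)).card ≤ Fintype.card ι := by
  by_contra hlt
  push_neg at hlt
  set P := Finset.univ.filter (fun i => 0 < hS.eigenvalues i) with hP
  have hnli : ¬ LinearIndependent ℝ (fun i : ↥P => A *ᵥ (⇑(hS.eigenvectorBasis i) : m → ℝ)) := by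
    intro hli
    have := hli.fintype_card_le_finrank
    rw [Module.finrank_pi ℝ] at this
    simp only [Fintype.card_coe] at this
    omega
  rw [Fintype.not_linearIndependent_iff] at hnli
  obtain ⟨c, hc0, i0, hci0⟩ := hnli
  set v : m → ℝ := ∑ i : ↥P, c i • (⇑(hS.eigenvectorBasis i) : m → ℝ) with hv
  have hAv : A *ᵥ v = 0 := by
    rw [hv, mulVec_sum']
    simp only [mulVec_smul]
    exact hc0
  have hSv : S *ᵥ v = ∑ i : ↥P, (c i * hS.eigenvalues i) • (⇑(hS.eigenvectorBasis i) : m → ℝ) := by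
    rw [hv, mulVec_sum']
    congr 1; funext i
    rw [mulVec_smul, hS.mulVec_eigenvectorBasis, smul_smul]
  have horth : ∀ i j : m, (⇑(hS.eigenvectorBasis i) : m → ℝ) ⬝ᵥ (⇑(hS.eigenvectorBasis j) : m → ℝ)
      = if i = j then 1 else 0 := by
    intro i j
    have horth0 := hS.eigenvectorBasis.orthonormal
    rw [orthonormal_iff_ite] at horth0
    have h2 := horth0 i j
    rw [EuclideanSpace.inner_eq_star_dotProduct] at h2
    simpa [dotProduct, mul_comm] using h2
  have hquad : v ⬝ᵥ (S *ᵥ v) = ∑ i : ↥P, hS.eigenvalues i * (c i)^2 := by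
    rw [hSv, hv, dotP_sum_left]
    congr 1; funext i
    rw [dotP_sum_right]
    rw [Finset.sum_eq_single i]
    · rw [smul_dotProduct, dotProduct_smul, horth, if_pos rfl]
      simp only [smul_eq_mul, mul_one]
      ring
    · intro j _ hji
      rw [smul_dotProduct, dotProduct_smul, horth]
      have : (i : m) ≠ (j : m) := fun h => hji.symm (Subtype.ext h)
      rw [if_neg this, smul_eq_mul, smul_eq_mul, mul_zero, mul_zero]
    · intro h; exact absurd (Finset.mem_univ i) h
  have hneg : 0 < v ⬝ᵥ (S *ᵥ v) := by
    rw [hquad]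
    have hle : ∀ i : ↥P, 0 ≤ hS.eigenvalues (i : m) * (c i)^2 := by
      intro i
      have hi : 0 < hS.eigenvalues (i : m) := (Finset.mem_filter.mp i.2).2
      nlinarith [sq_nonneg (c i)]
    have hstrict : 0 < hS.eigenvalues (i0 : m) * (c i0)^2 := by
      have hi : 0 < hS.eigenvalues (i0 : m) := (Finset.mem_filter.mp i0.2).2
      have : 0 < (c i0)^2 := by positivity
      nlinarith
    calc (0:ℝ) = ∑ _i : ↥P, 0 := by simp
      _ < ∑ i : ↥P, hS.eigenvalues (i : m) * (c i)^2 :=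
          Finset.sum_lt_sum (fun i _ => hle i) ⟨i0, Finset.mem_univ _, hstrict⟩
  exact absurd (hpos v hAv) (not_le.mpr hneg)

lemma quad_sub {m ι κ : Type} [Fintype m] [Fintype ι] [Fintype κ]
    (A : Matrix ι m ℝ) (B : Matrix κ m ℝ) (v : m → ℝ) :
    v ⬝ᵥ ((Aᵀ*A - Bᵀ*B) *ᵥ v) = (A *ᵥ v) ⬝ᵥ (A *ᵥ v) - (B *ᵥ v) ⬝ᵥ (B *ᵥ v) := by
  rw [Matrix.sub_mulVec, dotProduct_sub]
  congr 1 <;> rw [← mulVec_mulVec, dotProduct_mulVec, vecMul_transpose]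

lemma herm_sub_factor {m ι κ : Type} [Fintype m] [Fintype ι] [Fintype κ]
    (A : Matrix ι m ℝ) (B : Matrix κ m ℝ) : (Aᵀ*A - Bᵀ*B).IsHermitian := by
  have h1 : (Aᵀ*A).IsHermitian := by
    have := Matrix.isHermitian_conjTranspose_mul_self A
    rwa [Matrix.conjTranspose_eq_transpose_of_trivial] at this
  have h2 : (Bᵀ*B).IsHermitian := by
    have := Matrix.isHermitian_conjTranspose_mul_self B
    rwa [Matrix.conjTranspose_eq_transpose_of_trivial] at this
  exact h1.sub h2

lemma posEig_le_factor {m ι κ : Type} [Fintype m] [DecidableEq m] [Fintype ι] [Fintype κ]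
    (A : Matrix ι m ℝ) (B : Matrix κ m ℝ) (hS : (Aᵀ*A - Bᵀ*B).IsHermitian) :
    (Finset.univ.filter (fun i => 0 < hS.eigenvalues i)).card ≤ Fintype.card ι := by
  apply eig_count_le_of_factor' _ hS A
  intro v hv
  rw [quad_sub, hv]
  have h1 : (0 : ι → ℝ) ⬝ᵥ (0 : ι → ℝ) = 0 := by simp
  rw [h1, zero_sub, neg_nonpos]
  simp only [dotProduct]
  exact Finset.sum_nonneg (fun i _ => mul_self_nonneg _)

lemma negEig_le_factor {m ι κ : Type} [Fintype m] [DecidableEq m] [Fintype ι] [Fintype κ]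
    (A : Matrix ι m ℝ) (B : Matrix κ m ℝ) (hS : (Aᵀ*A - Bᵀ*B).IsHermitian) :
    (Finset.univ.filter (fun i => hS.eigenvalues i < 0)).card ≤ Fintype.card κ := by
  apply eig_count_le_of_factor _ hS B
  intro v hv
  rw [quad_sub, hv]
  simp only [dotProduct_zero, sub_zero]
  simp only [dotProduct]
  exact Finset.sum_nonneg (fun i _ => mul_self_nonneg _)

end SpectralBounds

namespace NCConvexity

variable {g : ℕ} {ℓ d : ℕ}

lemma main_bound (hg : 1 ≤ g) (q : NC3 g)
    (Z : Matrix (BIdx g ℓ d) (BIdx g ℓ d) (NC2 g))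
    (hZ : q = ∑ α, ∑ β, ncT3 (borderVec g ℓ d α) * emb23 (Z α β) * borderVec g ℓ d β)
    {σ τ : ℕ} (f : Fin σ → NC3 g) (r : Fin τ → NC3 g)
    (hf : ∀ j, hHomog3 (f j) 1) (hr : ∀ l, hHomog3 (r l) 1)
    (hsds : q = (∑ j, ncT3 (f j) * f j) - ∑ l, ncT3 (r l) * r l)
    {n : ℕ} (A X : MatTuple g n) (hA : IsSymTuple A) (hX : IsSymTuple X) :
    posEig (evalMat Z A X) ≤ n * σ ∧ negEig (evalMat Z A X) ≤ n * τ := by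
  classical
  have d0 : Fin g := ⟨0, hg⟩
  have hZeq := middle_matrix_unique d0 q Z hZ f r hf hr hsds
  set MF : Matrix (Fin σ × Fin n) (BIdx g ℓ d × Fin n) ℝ :=
    Matrix.of (fun js αi => eval (XT (tB αi.1) (f js.1)) A X js.2 αi.2) with hMF
  set MR : Matrix (Fin τ × Fin n) (BIdx g ℓ d × Fin n) ℝ :=
    Matrix.of (fun ls αi => eval (XT (tB αi.1) (r ls.1)) A X ls.2 αi.2) with hMR
  have hfact : evalMat Z A X = MFᵀ * MF - MRᵀ * MR := by
    ext ⟨α, i⟩ ⟨β, i'⟩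
    show eval (Z α β) A X i i' = _
    rw [hZeq α β, eval_sub, eval_sum, eval_sum]
    rw [Matrix.sub_apply, Matrix.sub_apply, Matrix.sum_apply, Matrix.sum_apply,
      Matrix.mul_apply, Matrix.mul_apply]
    congr 1
    · rw [Fintype.sum_prod_type]
      apply Finset.sum_congr rfl
      intro j _
      rw [eval_mul, eval_ncT _ _ _ hA hX, Matrix.mul_apply]
      apply Finset.sum_congr rfl
      intro s _
      rw [Matrix.transpose_apply]
      rfl
    · rw [Fintype.sum_prod_type]
      apply Finset.sum_congr rfl
      intro l _
      rw [eval_mul, eval_ncT _ _ _ hA hX, Matrix.mul_apply]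
      apply Finset.sum_congr rfl
      intro s _
      rw [Matrix.transpose_apply]
      rfl
  have hherm : (MFᵀ * MF - MRᵀ * MR).IsHermitian := herm_sub_factor MF MR
  constructor
  · rw [hfact]
    unfold posEig
    rw [dif_pos hherm]
    calc (Finset.univ.filter (fun i => 0 < hherm.eigenvalues i)).card
        ≤ Fintype.card (Fin σ × Fin n) := posEig_le_factor MF MR hherm
      _ = σ * n := by rw [Fintype.card_prod, Fintype.card_fin, Fintype.card_fin]
      _ = n * σ := Nat.mul_comm σ n
  · rw [hfact]
    unfold negEig
    rw [dif_pos hherm]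
    calc (Finset.univ.filter (fun i => hherm.eigenvalues i < 0)).card
        ≤ Fintype.card (Fin τ × Fin n) := negEig_le_factor MF MR hherm
      _ = τ * n := by rw [Fintype.card_prod, Fintype.card_fin, Fintype.card_fin]
      _ = n * τ := Nat.mul_comm τ n

end NCConvexity

open NCConvexity

/-- for a symmetric polynomial `q(a,x)[h]` of degree `ℓ` in `x`, homogeneous
of degree two in `h`, with middle matrix `Z(a,x)`, one has `μ_±(Z(A,X)) ≤ n σ_±(q)`. -/
theorem statement15 (g : ℕ) (hg : 1 ≤ g) (q : NC3 g) (hq : IsSymPoly3 q)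
    (ℓ : ℕ) (hℓ : xDegree3 q = ℓ) (hq2 : hHomog3 q 2)
    (Z : Matrix (BIdx g ℓ (aDegree3 q)) (BIdx g ℓ (aDegree3 q)) (NC2 g))
    (hZsym : SymPolyMat Z)
    (hZ : q = ∑ α, ∑ β,
      ncT3 (borderVec g ℓ (aDegree3 q) α) * emb23 (Z α β) * borderVec g ℓ (aDegree3 q) β) :
    ∀ (n : ℕ) (A X : MatTuple g n), IsSymTuple A → IsSymTuple X →
      posEig (evalMat Z A X) ≤ n * sigmaPlus q ∧
      negEig (evalMat Z A X) ≤ n * sigmaMinus q := by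
  intro n A X hA hX
  have hsds0 := exists_sds q hq Z hZ
  constructor
  · have hne : {σ | ∃ τ, IsSDS q σ τ}.Nonempty := ⟨_, _, hsds0⟩
    have hmem : ∃ τ, IsSDS q (sigmaPlus q) τ := Nat.sInf_mem hne
    obtain ⟨τ0, f, r, hf, hr, heq⟩ := hmem
    exact (main_bound hg q Z hZ f r hf hr heq A X hA hX).1
  · have hne : {τ | ∃ σ, IsSDS q σ τ}.Nonempty := ⟨_, _, hsds0⟩
    have hmem : ∃ σ0, IsSDS q σ0 (sigmaMinus q) := Nat.sInf_mem hne
    obtain ⟨σ0, f, r, hf, hr, heq⟩ := hmem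
    exact (main_bound hg q Z hZ f r hf hr heq A X hA hX).2
end

section
/- Fix integers n > d ≥ 1 and let {z_1,…,z_d} be a linearly independent set in ℝ^n. Then the linear subspace { (Hz_1, Hz_2, …, Hz_d) : H an n×n real symmetric matrix } of ℝ^{nd} has codimension exactly d(d−1)/2 (equivalently, dimension nd − d(d−1)/2); in particular, the codimension does not depend on n. -/
open scoped BigOperators Kronecker Matrix

namespace Statement17Aux

/-- Index of strictly-ordered pairs `i < j` in `Fin d`. -/
abbrev Pairs (d : ℕ) := Σ j : Fin d, Fin j.val

/-- Embedding of the small index into `Fin d`. -/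
def emb {d : ℕ} (p : Pairs d) : Fin d := ⟨p.2.val, p.2.isLt.trans p.1.isLt⟩

/-- The map `v ↦ (⟨z_i, v_j⟩ − ⟨z_j, v_i⟩)_{i<j}`. -/
noncomputable def phiMap (n d : ℕ) (z : Fin d → Fin n → ℝ) :
    (Fin d → Fin n → ℝ) →ₗ[ℝ] (Pairs d → ℝ) where
  toFun v := fun p => dotProduct (z (emb p)) (v p.1)
    - dotProduct (z p.1) (v (emb p))
  map_add' := fun u v => by
    funext p
    simp [dotProduct_add]
    ring
  map_smul' := fun c v => by
    funext p
    simp [dotProduct_smul, smul_eq_mul]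
    ring

lemma card_pairs (d : ℕ) : Fintype.card (Pairs d) = d * (d - 1) / 2 := by
  rw [Fintype.card_sigma]
  simp only [Fintype.card_fin]
  rw [Fin.sum_univ_eq_sum_range (fun i => i) d, Finset.sum_range_id]

end Statement17Aux


open NCConvexity

/-- for linearly independent `z_1, …, z_d` in `ℝ^n` (`n > d`), the space
`{(Hz_1, …, Hz_d) : H symmetric}` has dimension `nd − d(d−1)/2` and codimension `d(d−1)/2`
in `ℝ^{nd}`. -/
theorem statement17 (n d : ℕ) (hd : 1 ≤ d) (hnd : d < n)
    (z : Fin d → Fin n → ℝ) (hz : LinearIndependent ℝ z) :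
    Module.finrank ℝ (Submodule.map (stackMap n d z) (symmSub n)) =
      n * d - d * (d - 1) / 2 ∧
    Module.finrank ℝ
        ((Fin d → Fin n → ℝ) ⧸ Submodule.map (stackMap n d z) (symmSub n)) =
      d * (d - 1) / 2 := by
  classical
  open Statement17Aux in
  -- the transposed matrix of the `z`'s: rows are `z i`
  set Zt : Matrix (Fin d) (Fin n) ℝ := Matrix.of fun i r => z i r with hZt
  set G : Matrix (Fin d) (Fin d) ℝ := Zt * Zt.transpose with hG
  -- Gram matrix is invertible
  have hGunit : IsUnit G := by
    rw [← Matrix.mulVec_injective_iff_isUnit]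
    intro c c' hcc
    have key : ∀ c : Fin d → ℝ, G.mulVec c = 0 → c = 0 := by
      intro c hc
      have h1 : dotProduct c (G.mulVec c) = 0 := by rw [hc]; simp
      have h2 : G.mulVec c = Zt.mulVec (Zt.transpose.mulVec c) := by
        rw [hG, ← Matrix.mulVec_mulVec]
      have h3 : dotProduct c (G.mulVec c)
          = dotProduct (Zt.transpose.mulVec c) (Zt.transpose.mulVec c) := by
        rw [h2, Matrix.dotProduct_mulVec, ← Matrix.mulVec_transpose]
      have h4 : Zt.transpose.mulVec c = 0 := by
        rw [← dotProduct_self_eq_zero, ← h3, h1]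
      have h5 : ∑ i, c i • z i = 0 := by
        funext r
        have := congrFun h4 r
        simpa [Matrix.mulVec, dotProduct, Matrix.transpose, hZt,
          Matrix.of_apply, mul_comm, Finset.sum_apply] using this
      have := (Fintype.linearIndependent_iff.mp hz) c h5
      funext i; exact this i
    have : G.mulVec (c - c') = 0 := by
      rw [Matrix.mulVec_sub, hcc, sub_self]
    have := key _ this
    exact sub_eq_zero.mp this
  have hGdet : IsUnit G.det := (Matrix.isUnit_iff_isUnit_det G).mp hGunit
  have hGinvG : G⁻¹ * G = 1 := Matrix.nonsing_inv_mul G hGdet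
  have hGGinv : G * G⁻¹ = 1 := Matrix.mul_nonsing_inv G hGdet
  have hGsymm : G.transpose = G := by
    rw [hG, Matrix.transpose_mul, Matrix.transpose_transpose]
  have hGinvsymm : G⁻¹.transpose = G⁻¹ := by
    rw [Matrix.transpose_nonsing_inv, hGsymm]
  -- Key: the image equals the kernel of phiMap
  have hker : Submodule.map (stackMap n d z) (symmSub n) = LinearMap.ker (phiMap n d z) := by
    apply le_antisymm
    · rintro v ⟨H, hH, rfl⟩
      rw [LinearMap.mem_ker]
      funext p
      show dotProduct (z (emb p)) (H.mulVec (z p.1))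
          - dotProduct (z p.1) (H.mulVec (z (emb p))) = 0
      have hsym : ∀ a b : Fin n → ℝ, dotProduct a (H.mulVec b)
          = dotProduct b (H.mulVec a) := by
        intro a b
        rw [Matrix.dotProduct_mulVec, ← Matrix.mulVec_transpose, hH.eq,
          dotProduct_comm]
      rw [hsym]; ring
    · intro v hv
      rw [LinearMap.mem_ker] at hv
      -- full symmetry of the pairing
      have hsymm : ∀ i j : Fin d, dotProduct (z i) (v j)
          = dotProduct (z j) (v i) := by
        have hv' : ∀ p : Pairs d, dotProduct (z (emb p)) (v p.1)
            = dotProduct (z p.1) (v (emb p)) := by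
          intro p
          have := congrFun hv p
          simpa [phiMap, sub_eq_zero] using this
        intro i j
        rcases lt_trichotomy (i : ℕ) (j : ℕ) with h | h | h
        · exact hv' ⟨j, ⟨i, h⟩⟩
        · rw [Fin.ext h]
        · exact (hv' ⟨i, ⟨j, h⟩⟩).symm
      set Vt : Matrix (Fin d) (Fin n) ℝ := Matrix.of fun i r => v i r with hVt
      set S : Matrix (Fin d) (Fin d) ℝ := Zt * Vt.transpose with hS
      have hSsymm : S.transpose = S := by
        ext i j
        show (Zt * Vt.transpose) j i = (Zt * Vt.transpose) i j
        simp only [Matrix.mul_apply, Matrix.transpose_apply, hZt, hVt, Matrix.of_apply]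
        exact hsymm j i
      have hVZ : Vt * Zt.transpose = S := by
        rw [← hSsymm, hS, Matrix.transpose_mul, Matrix.transpose_transpose]
      set H : Matrix (Fin n) (Fin n) ℝ :=
        Vt.transpose * G⁻¹ * Zt + Zt.transpose * G⁻¹ * Vt
          - Zt.transpose * G⁻¹ * S * G⁻¹ * Zt with hH
      refine ⟨H, ?_, ?_⟩
      · show H.IsSymm
        unfold Matrix.IsSymm
        rw [hH]
        have hT : (Zt.transpose * G⁻¹ * S * G⁻¹ * Zt).transpose
            = Zt.transpose * G⁻¹ * S * G⁻¹ * Zt := by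
          simp only [Matrix.transpose_mul, Matrix.transpose_transpose, hGinvsymm, hSsymm]
          simp [Matrix.mul_assoc]
        have hT2 : (Vt.transpose * G⁻¹ * Zt).transpose = Zt.transpose * G⁻¹ * Vt := by
          simp only [Matrix.transpose_mul, Matrix.transpose_transpose, hGinvsymm]
          simp [Matrix.mul_assoc]
        have hT3 : (Zt.transpose * G⁻¹ * Vt).transpose = Vt.transpose * G⁻¹ * Zt := by
          simp only [Matrix.transpose_mul, Matrix.transpose_transpose, hGinvsymm]
          simp [Matrix.mul_assoc]
        rw [Matrix.transpose_sub, Matrix.transpose_add, hT, hT2, hT3]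
        abel
      · have hHZ : H * Zt.transpose = Vt.transpose := by
          rw [hH]
          rw [Matrix.sub_mul, Matrix.add_mul]
          rw [Matrix.mul_assoc (Vt.transpose * G⁻¹) Zt, ← hG]
          rw [Matrix.mul_assoc (Zt.transpose * G⁻¹) Vt, hVZ]
          rw [Matrix.mul_assoc (Zt.transpose * G⁻¹ * S * G⁻¹) Zt, ← hG]
          rw [Matrix.mul_assoc Vt.transpose G⁻¹ G, hGinvG, Matrix.mul_one]
          rw [Matrix.mul_assoc (Zt.transpose * G⁻¹ * S) G⁻¹ G, hGinvG, Matrix.mul_one]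
          abel
        funext j
        show H.mulVec (z j) = v j
        funext r
        have : (H * Zt.transpose) r j = Vt.transpose r j := by rw [hHZ]
        simpa [Matrix.mul_apply, Matrix.mulVec, dotProduct, Matrix.transpose,
          hZt, hVt] using this
  -- phiMap is surjective
  have hsurj : LinearMap.range (phiMap n d z) = ⊤ := by
    rw [LinearMap.range_eq_top]
    intro c
    set M : Matrix (Fin d) (Fin d) ℝ := Matrix.of fun i j =>
      if h : (i : ℕ) < (j : ℕ) then c ⟨j, ⟨i, h⟩⟩ else 0 with hM
    refine ⟨fun j r => (Zt.transpose * G⁻¹ * M) r j, ?_⟩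
    funext p
    have hdot : ∀ (i j : Fin d), dotProduct (z i)
        (fun r => (Zt.transpose * G⁻¹ * M) r j) = M i j := by
      intro i j
      have : Zt * (Zt.transpose * G⁻¹ * M) = M := by
        rw [← Matrix.mul_assoc, ← Matrix.mul_assoc, ← hG, Matrix.mul_assoc G G⁻¹ M,
          ← Matrix.mul_assoc G G⁻¹ M, hGGinv, Matrix.one_mul]
      have := congrFun (congrFun this i) j
      simpa [Matrix.mul_apply, dotProduct, hZt] using this
    show dotProduct (z (emb p)) _ - dotProduct (z p.1) _ = c p
    rw [hdot, hdot]
    have h1 : M (emb p) p.1 = c p := by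
      rw [hM]
      simp only [Matrix.of_apply]
      rw [dif_pos (show ((emb p : Fin d) : ℕ) < (p.1 : ℕ) from p.2.isLt)]
      congr 1
    have h2 : M p.1 (emb p) = 0 := by
      rw [hM]
      simp only [Matrix.of_apply]
      rw [dif_neg]
      exact not_lt.mpr (le_of_lt p.2.isLt)
    rw [h1, h2, sub_zero]
  -- now compute the two finranks
  have hcard : Module.finrank ℝ (Pairs d → ℝ) = d * (d - 1) / 2 := by
    rw [Module.finrank_fintype_fun_eq_card, card_pairs]
  have hdom : Module.finrank ℝ (Fin d → Fin n → ℝ) = n * d := by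
    rw [Module.finrank_pi_fintype]
    simp [Module.finrank_fintype_fun_eq_card, mul_comm]
  have hrange : Module.finrank ℝ (LinearMap.range (phiMap n d z)) = d * (d - 1) / 2 := by
    rw [hsurj, finrank_top, hcard]
  constructor
  · rw [hker]
    have := LinearMap.finrank_range_add_finrank_ker (phiMap n d z)
    rw [hrange, hdom] at this
    omega
  · rw [hker]
    have e := (phiMap n d z).quotKerEquivRange
    rw [e.finrank_eq, hrange]
end

section
/- (CHSY Lemma) Fix integers g ≥ 1 and n > d ≥ 1 and let {z_1,…,z_d} be a linearly independent subset of ℝ^n. Then the linear subspace { ⊕_{j=1}^g (H_j z_1, H_j z_2, …, H_j z_d) : H = (H_1,…,H_g) a g-tuple of n×n real symmetric matrices } of ℝ^{gnd} has codimension exactly g·d(d−1)/2 (equivalently, dimension gnd − g·d(d−1)/2), independent of n. -/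
open scoped BigOperators Kronecker Matrix

open NCConvexity


namespace CHSYAux

open Matrix

variable {g n d : ℕ}

abbrev Pairs (d : ℕ) := {p : Fin d × Fin d // p.1 < p.2}

noncomputable def psi (g : ℕ) {n d : ℕ} (z : Fin d → Fin n → ℝ) :
    (Fin g → Fin d → Fin n → ℝ) →ₗ[ℝ] (Fin g × Pairs d → ℝ) where
  toFun v := fun jp => z jp.2.1.2 ⬝ᵥ v jp.1 jp.2.1.1 - z jp.2.1.1 ⬝ᵥ v jp.1 jp.2.1.2
  map_add' v w := by
    funext jp
    simp only [Pi.add_apply, dotProduct_add]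
    ring
  map_smul' c v := by
    funext jp
    simp only [Pi.smul_apply, dotProduct_smul, smul_eq_mul, RingHom.id_apply]
    ring

lemma exists_dual (z : Fin d → Fin n → ℝ) (hz : LinearIndependent ℝ z) :
    ∃ w : Fin d → Fin n → ℝ, ∀ i j, z i ⬝ᵥ w j = if i = j then 1 else 0 := by
  classical
  set G : Matrix (Fin d) (Fin d) ℝ := Matrix.of fun i j => z i ⬝ᵥ z j with hG
  have h1 : ∀ (c : Fin d → ℝ) (i : Fin d),
      z i ⬝ᵥ (∑ j, c j • z j) = G.mulVec c i := by
    intro c i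
    simp only [G, mulVec, dotProduct, of_apply, Finset.sum_apply, Pi.smul_apply,
      smul_eq_mul, Finset.mul_sum, Finset.sum_mul]
    rw [Finset.sum_comm]
    exact Finset.sum_congr rfl fun jj _ => Finset.sum_congr rfl fun k _ => by ring
  have hinj : Function.Injective G.mulVecLin := by
    rw [← LinearMap.ker_eq_bot, LinearMap.ker_eq_bot']
    intro c hc
    have hc' : G.mulVec c = 0 := hc
    set u := ∑ j, c j • z j with hu
    have h2 : u ⬝ᵥ u = ∑ j, c j * (z j ⬝ᵥ u) := by
      simp only [hu, dotProduct, Finset.sum_apply, Pi.smul_apply, smul_eq_mul,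
        Finset.sum_mul, Finset.mul_sum]
      rw [Finset.sum_comm]
      exact Finset.sum_congr rfl fun y _ => Finset.sum_congr rfl fun x _ =>
        Finset.sum_congr rfl fun i _ => by ring
    have h3 : u ⬝ᵥ u = 0 := by
      rw [h2]
      apply Finset.sum_eq_zero
      intro j _
      rw [h1, hc']
      simp
    have h4 : u = 0 := dotProduct_self_eq_zero.mp h3
    funext i
    exact Fintype.linearIndependent_iff.mp hz c (hu ▸ h4) i
  have hsurj : Function.Surjective G.mulVecLin :=
    LinearMap.injective_iff_surjective.mp hinj
  choose c hc using fun j => hsurj (Pi.single j 1)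
  refine ⟨fun j => ∑ i, c j i • z i, fun i j => ?_⟩
  rw [h1, show G.mulVec (c j) = G.mulVecLin (c j) from rfl, hc j]
  simp [Pi.single_apply]

lemma map_eq_ker (g : ℕ) (z w : Fin d → Fin n → ℝ)
    (hw : ∀ i j, z i ⬝ᵥ w j = if i = j then 1 else 0) :
    Submodule.map (NCConvexity.stackMapG g n d z)
        (Submodule.pi Set.univ fun _ : Fin g => NCConvexity.symmSub n)
      = LinearMap.ker (psi g z) := by
  classical
  apply le_antisymm
  · rintro _ ⟨H, hH, rfl⟩
    rw [LinearMap.mem_ker]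
    funext jp
    obtain ⟨j, ⟨⟨p, q⟩, hpq⟩⟩ := jp
    have hs : ((H j)ᵀ : Matrix (Fin n) (Fin n) ℝ) = H j :=
      (Submodule.mem_pi.mp hH) j (Set.mem_univ j)
    show z q ⬝ᵥ (H j).mulVec (z p) - z p ⬝ᵥ (H j).mulVec (z q) = 0
    have : z q ⬝ᵥ (H j).mulVec (z p) = z p ⬝ᵥ (H j).mulVec (z q) := by
      rw [dotProduct_mulVec, ← mulVec_transpose, hs, dotProduct_comm]
    rw [this, sub_self]
  · intro v hv
    rw [LinearMap.mem_ker] at hv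
    have hzv : ∀ (j : Fin g) (a b : Fin d), z b ⬝ᵥ v j a = z a ⬝ᵥ v j b := by
      intro j a b
      rcases lt_trichotomy a b with h | h | h
      · have := congrFun hv (j, ⟨(a, b), h⟩)
        simp only [psi, LinearMap.coe_mk, AddHom.coe_mk, Pi.zero_apply] at this
        linarith
      · subst h; rfl
      · have := congrFun hv (j, ⟨(b, a), h⟩)
        simp only [psi, LinearMap.coe_mk, AddHom.coe_mk, Pi.zero_apply] at this
        linarith
    refine ⟨fun j => Matrix.of fun p q =>
      (∑ i, (v j i p * w i q + w i p * v j i q))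
        - ∑ i, ∑ i', (z i' ⬝ᵥ v j i) * (w i p * w i' q), ?_, ?_⟩
    · simp only [SetLike.mem_coe, Submodule.mem_pi]
      intro j _
      show Matrix.IsSymm _
      rw [Matrix.IsSymm]
      ext p q
      simp only [transpose_apply, of_apply]
      congr 1
      · exact Finset.sum_congr rfl fun i _ => by ring
      · rw [Finset.sum_comm]
        refine Finset.sum_congr rfl fun i _ => Finset.sum_congr rfl fun i' _ => ?_
        rw [hzv]
        ring
    · funext j k
      show (Matrix.of _ : Matrix (Fin n) (Fin n) ℝ).mulVec (z k) = v j k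
      funext p
      have hwd : ∀ (i m : Fin d), ∑ q, w i q * z m q = if m = i then 1 else 0 := by
        intro i m
        rw [← hw m i]
        exact Finset.sum_congr rfl fun q _ => mul_comm _ _
      have hvd : ∀ i : Fin d, ∑ q, v j i q * z k q = z k ⬝ᵥ v j i := by
        intro i
        exact Finset.sum_congr rfl fun q _ => mul_comm _ _
      show ∑ q, ((∑ i, (v j i p * w i q + w i p * v j i q))
          - ∑ i, ∑ i', (z i' ⬝ᵥ v j i) * (w i p * w i' q)) * z k q = v j k p
      have step : ∑ q, ((∑ i, (v j i p * w i q + w i p * v j i q))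
          - ∑ i, ∑ i', (z i' ⬝ᵥ v j i) * (w i p * w i' q)) * z k q
        = (∑ i, (v j i p * (∑ q, w i q * z k q) + w i p * (∑ q, v j i q * z k q)))
          - ∑ i, ∑ i', (z i' ⬝ᵥ v j i) * w i p * (∑ q, w i' q * z k q) := by
        simp only [sub_mul, Finset.sum_sub_distrib, Finset.sum_mul, Finset.mul_sum]
        congr 1
        · rw [Finset.sum_comm]
          refine Finset.sum_congr rfl fun i _ => ?_
          rw [← Finset.sum_add_distrib]
          refine Finset.sum_congr rfl fun q _ => by ring
        · rw [Finset.sum_comm]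
          refine Finset.sum_congr rfl fun i _ => ?_
          rw [Finset.sum_comm]
          refine Finset.sum_congr rfl fun i' _ => Finset.sum_congr rfl fun q _ => by ring
      rw [step]
      simp only [hwd, hvd, mul_ite, mul_one, mul_zero]
      rw [Finset.sum_add_distrib]
      simp only [Finset.sum_ite_eq, Finset.mem_univ, if_true]
      have hc : ∑ i, w i p * (z k ⬝ᵥ v j i) - ∑ i, (z k ⬝ᵥ v j i) * w i p = 0 := by
        rw [sub_eq_zero]
        exact Finset.sum_congr rfl fun i _ => mul_comm _ _
      linarith [hc]

lemma psi_surjective (g : ℕ) (z w : Fin d → Fin n → ℝ)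
    (hw : ∀ i j, z i ⬝ᵥ w j = if i = j then 1 else 0) :
    Function.Surjective (psi (n := n) g z) := by
  classical
  intro t
  refine ⟨fun j i => ∑ i', (if h : i < i' then t (j, ⟨(i, i'), h⟩) else 0) • w i', ?_⟩
  have key : ∀ (j : Fin g) (m i : Fin d),
      z m ⬝ᵥ (∑ i', (if h : i < i' then t (j, ⟨(i, i'), h⟩) else 0) • w i')
        = if h : i < m then t (j, ⟨(i, m), h⟩) else 0 := by
    intro j m i
    have expand : z m ⬝ᵥ (∑ i', (if h : i < i' then t (j, ⟨(i, i'), h⟩) else 0) • w i')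
        = ∑ i', (if h : i < i' then t (j, ⟨(i, i'), h⟩) else 0) * (z m ⬝ᵥ w i') := by
      simp only [dotProduct, Finset.sum_apply, Pi.smul_apply, smul_eq_mul,
        Finset.mul_sum, Finset.sum_mul]
      rw [Finset.sum_comm]
      exact Finset.sum_congr rfl fun a _ => Finset.sum_congr rfl fun b _ => by ring
    rw [expand]
    simp only [hw, mul_ite, mul_one, mul_zero]
    rw [Finset.sum_eq_single m]
    · simp
    · intro b _ hb
      simp [Ne.symm hb]
    · simp
  funext jp
  obtain ⟨j, ⟨⟨a, b⟩, hab⟩⟩ := jp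
  show z b ⬝ᵥ _ - z a ⬝ᵥ _ = t (j, ⟨(a, b), hab⟩)
  rw [key, key, dif_pos hab, dif_neg (lt_asymm hab)]
  ring

lemma card_pairs (d : ℕ) : Fintype.card (Pairs d) = d * (d - 1) / 2 := by
  have e : Pairs d ≃ Σ j : Fin d, Fin j.1 :=
    { toFun := fun p => ⟨p.1.2, ⟨p.1.1, p.2⟩⟩
      invFun := fun x => ⟨(⟨x.2.1, lt_trans x.2.2 x.1.2⟩, x.1), x.2.2⟩
      left_inv := fun p => by
        obtain ⟨⟨a, b⟩, h⟩ := p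
        rfl
      right_inv := fun x => by
        obtain ⟨a, b⟩ := x
        rfl }
  rw [Fintype.card_congr e, Fintype.card_sigma]
  simp only [Fintype.card_fin]
  rw [Fin.sum_univ_eq_sum_range (fun i => i) d]
  exact Finset.sum_range_id d

end CHSYAux

/-- CHSY Lemma: for linearly independent `z_1, …, z_d` in `ℝ^n` (`n > d`),
the space `{⊕_{j=1}^g (H_j z_1, …, H_j z_d) : H_j symmetric}` has dimension
`gnd − g·d(d−1)/2` and codimension `g·d(d−1)/2` in `ℝ^{gnd}`. -/



theorem statement18 (g n d : ℕ) (hg : 1 ≤ g) (hd : 1 ≤ d) (hnd : d < n)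
    (z : Fin d → Fin n → ℝ) (hz : LinearIndependent ℝ z) :
    Module.finrank ℝ (Submodule.map (stackMapG g n d z)
        (Submodule.pi Set.univ (fun _ : Fin g => symmSub n))) =
      g * (n * d) - g * (d * (d - 1) / 2) ∧
    Module.finrank ℝ
        ((Fin g → Fin d → Fin n → ℝ) ⧸ Submodule.map (stackMapG g n d z)
          (Submodule.pi Set.univ (fun _ : Fin g => symmSub n))) =
      g * (d * (d - 1) / 2) := by
  classical
  obtain ⟨w, hw⟩ := CHSYAux.exists_dual z hz
  have hker := CHSYAux.map_eq_ker g z w hw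
  have hsurj := CHSYAux.psi_surjective g z w hw
  have hrange : LinearMap.range (CHSYAux.psi (n := n) g z) = ⊤ :=
    LinearMap.range_eq_top.mpr hsurj
  have hrn := LinearMap.finrank_range_add_finrank_ker (CHSYAux.psi (n := n) g z)
  have hdom : Module.finrank ℝ (Fin g → Fin d → Fin n → ℝ) = g * (n * d) := by
    rw [Module.finrank_pi_fintype]
    simp only [Module.finrank_pi_fintype (R := ℝ) (M := fun _ : Fin d => Fin n → ℝ),
      Module.finrank_fintype_fun_eq_card, Fintype.card_fin]
    simp [Finset.sum_const, mul_comm]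
  have hcod : Module.finrank ℝ (Fin g × CHSYAux.Pairs d → ℝ) = g * (d * (d - 1) / 2) := by
    rw [Module.finrank_fintype_fun_eq_card, Fintype.card_prod, Fintype.card_fin,
      CHSYAux.card_pairs]
  rw [hrange, finrank_top, hcod, hdom] at hrn
  have hS : Module.finrank ℝ ↥(Submodule.map (stackMapG g n d z)
      (Submodule.pi Set.univ (fun _ : Fin g => symmSub n)))
      = g * (n * d) - g * (d * (d - 1) / 2) := by
    rw [hker]
    exact Nat.eq_sub_of_add_eq' hrn
  refine ⟨hS, ?_⟩
  have hq := Submodule.finrank_quotient_add_finrank (Submodule.map (stackMapG g n d z)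
      (Submodule.pi Set.univ (fun _ : Fin g => symmSub n)))
  rw [hS, hdom] at hq
  have hle : g * (d * (d - 1) / 2) ≤ g * (n * d) := by
    rw [← hrn]
    exact Nat.le_add_right _ _
  have h2 := Nat.eq_sub_of_add_eq hq
  rw [h2, Nat.sub_sub_self hle]
end
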